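/- arXiv:1304.0684 — 3 statements merged into one kernel-verified Lean document; each statement's English description precedes it below -/
import Mathlib

section
/- Jacobi's identity: as formal power series over ℤ, ∏_{m≥1}(1 - q^m)³ = ∑_{μ=0}^{∞} (-1)^μ (2μ+1) q^{μ(μ+1)/2}. -/
open PowerSeries Finset

/-- The Euler product `(q;q)_∞ = ∏_{m≥1} (1 - q^m)` as a formal power series over `ℤ`. -/
noncomputable def eulerProd : PowerSeries ℤ :=
  PowerSeries.mk fun n =>
    PowerSeries.coeff n (∏ k ∈ Finset.range (n + 1), (1 - (X : PowerSeries ℤ) ^ (1 + k)))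

noncomputable section JacobiAux

namespace JacobiAux

abbrev R := PowerSeries ℤ

def fq (m : ℕ) : R := ∏ k ∈ Finset.range m, (1 - (X : R) ^ (k + 1))

def qb : ℕ → ℕ → R
  | _, 0 => 1
  | 0, _ + 1 => 0
  | n + 1, k + 1 => qb n k + (X : R) ^ (k + 1) * qb n (k + 1)

@[simp] lemma qb_zero (n : ℕ) : qb n 0 = 1 := by cases n <;> rfl

lemma qb_succ_succ (n k : ℕ) :
    qb (n + 1) (k + 1) = qb n k + (X : R) ^ (k + 1) * qb n (k + 1) := rfl

lemma qb_of_lt : ∀ {n k : ℕ}, n < k → qb n k = 0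
  | 0, _ + 1, _ => rfl
  | n + 1, k + 1, h => by
      rw [qb_succ_succ, qb_of_lt (by omega), qb_of_lt (by omega), mul_zero, add_zero]

@[simp] lemma qb_self : ∀ n : ℕ, qb n n = 1
  | 0 => rfl
  | n + 1 => by
      rw [qb_succ_succ, qb_self n, qb_of_lt (by omega), mul_zero, add_zero]

lemma fq_succ (m : ℕ) : fq (m + 1) = fq m * (1 - (X : R) ^ (m + 1)) :=
  Finset.prod_range_succ _ m

@[simp] lemma fq_zero : fq 0 = 1 := by simp [fq]

lemma constantCoeff_fq (m : ℕ) : constantCoeff (fq m) = 1 := by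
  induction m with
  | zero => simp [fq]
  | succ m ih => rw [fq_succ, map_mul, ih, one_mul]; simp

lemma isUnit_fq (m : ℕ) : IsUnit (fq m) := by
  rw [PowerSeries.isUnit_iff_constantCoeff, constantCoeff_fq]; exact isUnit_one

lemma fq_ne_zero (m : ℕ) : fq m ≠ 0 := (isUnit_fq m).ne_zero

lemma qb_mul_fq : ∀ n k : ℕ, k ≤ n → qb n k * fq k * fq (n - k) = fq n := by
  intro n
  induction n with
  | zero => intro k hk; interval_cases k; simp
  | succ n ih =>
    intro k hk
    match k with
    | 0 => simp
    | k + 1 =>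
      rcases eq_or_lt_of_le hk with h | h
      · have : k = n := by omega
        subst this; simp
      · obtain ⟨d, hd⟩ : ∃ d, n = k + 1 + d := ⟨n - (k + 1), by omega⟩
        subst hd
        have h1 := ih k (by omega)
        have h2 := ih (k + 1) (by omega)
        have e1 : k + 1 + d - k = d + 1 := by omega
        have e2 : k + 1 + d - (k + 1) = d := by omega
        have e3 : k + 1 + d + 1 - (k + 1) = d + 1 := by omega
        rw [e1, fq_succ] at h1
        rw [e2, fq_succ k] at h2
        rw [qb_succ_succ, e3, fq_succ d, fq_succ (k + 1 + d), fq_succ k]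
        have hx : (X : R) ^ (k + 1) * X ^ (d + 1) = X ^ (k + 1 + d + 1) := by
          rw [← pow_add]; ring_nf
        linear_combination (1 - (X : R) ^ (k + 1)) * h1 +
          (X : R) ^ (k + 1) * (1 - (X : R) ^ (d + 1)) * h2 +
          (qb (k + 1 + d) (k + 1) * fq (k + 1) * fq d - fq (k + 1 + d)) * hx

/-- absorption identity -/
lemma qb_absorb (N k : ℕ) :
    (1 - (X : R) ^ (k + 1)) * qb N (k + 1) = (1 - (X : R) ^ (N - k)) * qb N k := by
  rcases le_or_gt (k + 1) N with h | h
  · obtain ⟨d, hd⟩ : ∃ d, N = k + 1 + d := ⟨N - (k + 1), by omega⟩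
    subst hd
    have h1 := qb_mul_fq (k + 1 + d) (k + 1) h
    have h2 := qb_mul_fq (k + 1 + d) k (by omega)
    have e1 : k + 1 + d - k = d + 1 := by omega
    have e2 : k + 1 + d - (k + 1) = d := by omega
    rw [e2, fq_succ k] at h1
    rw [e1, fq_succ d] at h2
    rw [e1]
    have hnz : fq k * fq d ≠ 0 := mul_ne_zero (fq_ne_zero _) (fq_ne_zero _)
    apply mul_right_cancel₀ hnz
    linear_combination h1 - h2
  · by_cases hk : k = N
    · subst hk
      rw [qb_of_lt (show k < k + 1 by omega), Nat.sub_self]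
      simp
    · rw [qb_of_lt (by omega), qb_of_lt (by omega)]
      simp

/-- rule B -/
lemma qb_ruleB (n k : ℕ) :
    qb (n + 1) (k + 1) = (X : R) ^ (n - k) * qb n k + qb n (k + 1) := by
  rcases le_or_gt (k + 1) n with h | h
  · have habs := qb_absorb n k
    rw [qb_succ_succ]
    linear_combination - habs
  · by_cases hk : k = n
    · subst hk
      rw [qb_succ_succ, qb_of_lt (show k < k + 1 by omega), Nat.sub_self]
      simp
    · rw [qb_of_lt (by omega), qb_of_lt (by omega), qb_of_lt (by omega)]
      simp

/-- the `star` recurrence, base case -/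
lemma qb_star0 (n : ℕ) :
    qb (2*n+2) 1 = (1 + (X:R)^(2*n+1)) * qb (2*n) 0 + (X:R)^1 * qb (2*n) 1 := by
  have h1 : qb (2*n+2) 1 = qb (2*n+1) 0 + (X:R)^1 * qb (2*n+1) 1 := qb_succ_succ _ 0
  have h2 : qb (2*n+1) 1 = (X:R)^(2*n) * qb (2*n) 0 + qb (2*n) 1 := qb_ruleB _ 0
  rw [h1, h2]
  simp only [qb_zero]
  have : (X:R)^1 * (X:R)^(2*n) = (X:R)^(2*n+1) := by rw [← pow_add]; ring_nf
  linear_combination this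

/-- the `star` recurrence -/
lemma qb_star (n m : ℕ) :
    qb (2*n+2) (m+2) = (1 + (X:R)^(2*n+1)) * qb (2*n) (m+1)
      + (X:R)^(m+2) * qb (2*n) (m+2) + (X:R)^(2*n-m) * qb (2*n) m := by
  rcases le_or_gt m (2*n) with h | h
  · have h1 : qb (2*n+2) (m+2) = (X:R)^(2*n-m) * qb (2*n+1) (m+1) + qb (2*n+1) (m+2) := by
      have := qb_ruleB (2*n+1) (m+1)
      rwa [show 2*n+1 - (m+1) = 2*n - m by omega] at this
    have h2 : qb (2*n+1) (m+1) = qb (2*n) m + (X:R)^(m+1) * qb (2*n) (m+1) := qb_succ_succ _ _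
    have h3 : qb (2*n+1) (m+2) = (X:R)^(2*n-(m+1)) * qb (2*n) (m+1) + qb (2*n) (m+2) :=
      qb_ruleB (2*n) (m+1)
    have habs : (1 - (X:R)^(m+2)) * qb (2*n) (m+2)
        = (1 - (X:R)^(2*n-(m+1))) * qb (2*n) (m+1) := qb_absorb (2*n) (m+1)
    have hx : (X:R)^(2*n-m) * (X:R)^(m+1) = (X:R)^(2*n+1) := by
      rw [← pow_add]; congr 1; omega
    rw [h1, h2, h3]
    linear_combination qb (2*n) (m+1) * hx + habs
  · rw [qb_of_lt (show 2*n+2 < m+2 by omega), qb_of_lt (show 2*n < m+1 by omega),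
      qb_of_lt (show 2*n < m+2 by omega), qb_of_lt h]
    simp

/-- triangular numbers -/
def T : ℕ → ℕ
  | 0 => 0
  | j + 1 => T j + (j + 1)

lemma T_succ (j : ℕ) : T (j + 1) = T j + (j + 1) := rfl

lemma T_eq (j : ℕ) : T j = j * (j + 1) / 2 := by
  induction j with
  | zero => rfl
  | succ j ih =>
    rw [T_succ, ih]
    have : (j+1) * (j+1+1) = j*(j+1) + 2*(j+1) := by ring
    omega

lemma le_T (j : ℕ) : j ≤ T j := by
  induction j with
  | zero => simp [T]
  | succ j ih => rw [T_succ]; omega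

/-- exponent of `X` in the coefficient of `z^m` in `H n` -/
def tE (n m : ℕ) : ℕ := if n ≤ m then T (m - n) else T (n - m - 1)

lemma tE_of_le {n m : ℕ} (h : n ≤ m) : tE n m = T (m - n) := if_pos h
lemma tE_of_gt {n m : ℕ} (h : m < n) : tE n m = T (n - m - 1) := if_neg (by omega)

lemma eL0 (n : ℕ) : tE (n+1) 0 = n + tE n 0 := by
  cases n with
  | zero => simp [tE, T]
  | succ n =>
    rw [tE_of_gt (by omega), tE_of_gt (by omega)]
    rw [show n+1+1-0-1 = (n+1-0-1)+1 by omega, T_succ]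
    omega

lemma eL1 (n m : ℕ) : tE (n+1) (m+1) = tE n m := by
  rcases le_or_gt n m with h | h
  · rw [tE_of_le (by omega), tE_of_le h, show m+1-(n+1) = m-n by omega]
  · rw [tE_of_gt (by omega), tE_of_gt h, show n+1-(m+1)-1 = n-m-1 by omega]

lemma eL2 (n m : ℕ) : tE n (m+1) + n = tE (n+1) (m+1) + (m+1) := by
  rcases le_or_gt n m with h | h
  · obtain ⟨j, rfl⟩ : ∃ j, m = n + j := ⟨m - n, by omega⟩
    rw [tE_of_le (by omega), tE_of_le (by omega),
      show n+j+1-n = j+1 by omega, show n+j+1-(n+1) = j by omega, T_succ]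
    omega
  · by_cases h2 : n = m + 1
    · subst h2
      rw [tE_of_le le_rfl, tE_of_gt (by omega)]
      simp [T]
    · rw [tE_of_gt (by omega), tE_of_gt (by omega),
        show n+1-(m+1)-1 = (n-(m+1)-1)+1 by omega, T_succ]
      omega

lemma eL3 (n m : ℕ) (h : m ≤ 2*n) : tE n m + (n+1) = tE (n+1) (m+2) + (2*n - m) := by
  rcases le_or_gt n m with h1 | h1
  · rw [tE_of_le h1, tE_of_le (by omega),
      show m+2-(n+1) = (m-n)+1 by omega, T_succ]
    omega
  · by_cases h2 : n = m + 1
    · subst h2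
      rw [tE_of_gt (by omega), tE_of_le (by omega),
        show m+1-m-1 = 0 by omega, show m+2-(m+1+1) = 0 by omega]
      omega
    · rw [tE_of_gt h1, tE_of_gt (by omega),
        show n-m-1 = (n+1-(m+2)-1)+1 by omega, T_succ]
      omega

/-- coefficients of the two-variable product -/
def cc (n m : ℕ) : R := (-1 : R)^(n+m) * (X:R)^(tE n m) * qb (2*n) m

/-- the two-variable polynomial `H_n(z) = ∏_{k=1}^n (1-z q^k)(z-q^{k-1})` -/
def Hp (n : ℕ) : Polynomial R :=
  ∏ k ∈ Finset.range n,
    ((1 - Polynomial.C ((X:R)^(k+1)) * Polynomial.X) * (Polynomial.X - Polynomial.C ((X:R)^k)))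

lemma Hp_succ (n : ℕ) : Hp (n+1) = Hp n *
    ((1 - Polynomial.C ((X:R)^(n+1)) * Polynomial.X) * (Polynomial.X - Polynomial.C ((X:R)^n))) :=
  Finset.prod_range_succ _ n

lemma coeff_Hp (n : ℕ) : ∀ m : ℕ, (Hp n).coeff m = cc n m := by
  induction n with
  | zero =>
    intro m
    have : Hp 0 = 1 := by simp [Hp]
    rw [this, cc]
    cases m with
    | zero => simp [tE, T, qb_zero]
    | succ m => rw [qb_of_lt (by omega)]; simp [Polynomial.coeff_one]
  | succ n ih =>
    intro m
    have hab : (X:R)^(n+1) * (X:R)^n = (X:R)^(2*n+1) := by rw [← pow_add]; congr 1; omega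
    have expand : Hp (n+1) = Hp n * Polynomial.X ^ 1
        + Polynomial.C ((X:R)^(2*n+1)) * (Hp n * Polynomial.X ^ 1)
        - Polynomial.C ((X:R)^n) * Hp n
        - Polynomial.C ((X:R)^(n+1)) * (Hp n * Polynomial.X ^ 2) := by
      rw [Hp_succ, ← hab, Polynomial.C_mul]; ring
    rw [expand]
    simp only [Polynomial.coeff_sub, Polynomial.coeff_add, Polynomial.coeff_C_mul,
      Polynomial.coeff_mul_X_pow', ih, one_mul]
    rcases m with _ | m'
    · -- m = 0
      norm_num
      simp only [cc, qb_zero, mul_one, eL0, pow_add]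
      ring
    rcases m' with _ | m''
    · -- m = 1
      norm_num
      have e : tE (n+1) 1 = tE n 0 := eL1 n 0
      have e2 : tE n 1 + n = tE (n+1) 1 + 1 := eL2 n 0
      have p1 : (X:R)^n * X^(tE n 1) = X^(tE n 0) * X^1 := by
        rw [← pow_add, ← pow_add]; congr 1; omega
      simp only [cc, qb_zero, mul_one, show 2*(n+1) = 2*n+2 from by ring]
      rw [qb_star0 n, e]
      simp only [qb_zero]
      linear_combination ((-1:R)^n * qb (2*n) 1) * p1
    · -- m = m'' + 2
      have hif1 : (1:ℕ) ≤ m'' + 2 := by omega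
      have hif2 : (2:ℕ) ≤ m'' + 2 := by omega
      rw [if_pos hif1, if_pos hif2, show m'' + 2 - 1 = m'' + 1 from by omega,
        show m'' + 2 - 2 = m'' from by omega]
      rcases le_or_gt m'' (2*n) with hm | hm
      · have s := qb_star n m''
        have e1 : tE (n+1) (m''+2) = tE n (m''+1) := eL1 n (m''+1)
        have e2 : tE n (m''+2) + n = tE (n+1) (m''+2) + (m''+2) := eL2 n (m''+1)
        have e3 : tE n m'' + (n+1) = tE (n+1) (m''+2) + (2*n - m'') := eL3 n m'' hm
        have p2 : (X:R)^n * X^(tE n (m''+2)) = X^(tE n (m''+1)) * X^(m''+2) := by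
          rw [← pow_add, ← pow_add]; congr 1; omega
        have p3 : (X:R)^(n+1) * X^(tE n m'') = X^(tE n (m''+1)) * X^(2*n - m'') := by
          rw [← pow_add, ← pow_add]; congr 1; omega
        simp only [cc, show 2*(n+1) = 2*n+2 from by ring,
          show m'' + 1 + 1 = m'' + 2 from rfl]
        rw [qb_star n m'', e1]
        linear_combination ((-1:R)^(n+m''+1) * qb (2*n) (m''+2)) * p2
          + ((-1:R)^(n+m''+1) * qb (2*n) m'') * p3
      · simp only [cc]
        rw [qb_of_lt (show 2*n < m''+1 by omega), qb_of_lt (show 2*n < m''+1+1 by omega),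
          qb_of_lt (show 2*n < m'' by omega), qb_of_lt (show 2*(n+1) < m''+1+1 by omega)]
        simp

lemma cc_of_lt {n m : ℕ} (h : 2*n < m) : cc n m = 0 := by
  simp [cc, qb_of_lt h]

lemma Hp_eq_sum (n : ℕ) :
    Hp n = ∑ m ∈ Finset.range (2*n+1), Polynomial.C (cc n m) * Polynomial.X ^ m := by
  ext i
  rw [coeff_Hp, Polynomial.finset_sum_coeff]
  simp only [Polynomial.coeff_C_mul, Polynomial.coeff_X_pow, mul_ite, mul_one, mul_zero]
  rcases le_or_gt i (2*n) with h | h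
  · rw [Finset.sum_eq_single i (fun b _ hb => by rw [if_neg (fun hh => hb hh.symm)])
      (fun hi => absurd (Finset.mem_range.mpr (by omega)) hi)]
    simp
  · rw [cc_of_lt h, Finset.sum_eq_zero]
    intro b hb
    rw [if_neg (by simp at hb; omega)]

/-- the `z - 1` factorization -/
def Gp (n : ℕ) : Polynomial R :=
  (∏ k ∈ Finset.range n, (1 - Polynomial.C ((X:R)^(k+1)) * Polynomial.X)) *
    ∏ k ∈ Finset.range (n-1), (Polynomial.X - Polynomial.C ((X:R)^(k+1)))

lemma Hp_factor (n : ℕ) (hn : 1 ≤ n) : Hp n = (Polynomial.X - 1) * Gp n := by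
  obtain ⟨n', rfl⟩ : ∃ n', n = n' + 1 := ⟨n - 1, by omega⟩
  rw [Hp, Finset.prod_mul_distrib, Gp]
  rw [Finset.prod_range_succ' (fun k => Polynomial.X - Polynomial.C ((X:R)^k)) n']
  simp only [pow_zero, map_one, Nat.add_sub_cancel]
  ring

lemma eval_Gp (n : ℕ) : Polynomial.eval 1 (Gp n) = fq n * fq (n-1) := by
  rw [Gp]
  simp only [Polynomial.eval_mul, Polynomial.eval_prod, Polynomial.eval_sub,
    Polynomial.eval_mul, Polynomial.eval_one, Polynomial.eval_C, Polynomial.eval_X, mul_one]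
  rfl

lemma E1 (n : ℕ) (hn : 1 ≤ n) : ∑ m ∈ Finset.range (2*n+1), cc n m = 0 := by
  have h := Hp_factor n hn
  have h2 := Hp_eq_sum n
  have : Polynomial.eval 1 (Hp n) = 0 := by
    rw [h]; simp
  rw [h2, Polynomial.eval_finset_sum] at this
  simpa using this

lemma E2 (n : ℕ) (hn : 1 ≤ n) :
    ∑ m ∈ Finset.range (2*n+1), (m : R) * cc n m = fq n * fq (n-1) := by
  have h := Hp_factor n hn
  have hval : Polynomial.eval 1 (Polynomial.derivative (Hp n)) = fq n * fq (n-1) := by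
    rw [h, Polynomial.derivative_mul]
    simp [eval_Gp]
  rw [Hp_eq_sum n] at hval
  rw [← hval]
  rw [map_sum]
  rw [Polynomial.eval_finset_sum]
  apply Finset.sum_congr rfl
  intro m _
  rw [Polynomial.derivative_C_mul, Polynomial.derivative_X_pow]
  simp [mul_comm]

lemma neg_one_pow_congr {a b : ℕ} (h : a % 2 = b % 2) : (-1:R)^a = (-1:R)^b := by
  conv_lhs => rw [← Nat.div_add_mod a 2]
  conv_rhs => rw [← Nat.div_add_mod b 2]
  rw [pow_add, pow_mul, pow_add, pow_mul, neg_one_sq, one_pow, one_pow, h]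

def gJ : ℕ → R := fun μ => PowerSeries.C ((-1)^μ * (μ:ℤ)) * (X:R)^(T μ)

lemma sum_ideal (n : ℕ) :
    ∑ m ∈ Finset.range (2*n+1), ((m:R) - (n:R)) * ((-1:R)^(n+m) * (X:R)^(tE n m))
      = (∑ μ ∈ Finset.range n, PowerSeries.C ((-1)^μ * (2*(μ:ℤ)+1)) * (X:R)^(T μ))
        + PowerSeries.C ((-1)^n * (n:ℤ)) * (X:R)^(T n) := by
  have key : ∀ μ ∈ Finset.range n,
      (((n-1-μ : ℕ):R) - (n:R)) * ((-1:R)^(n+(n-1-μ)) * (X:R)^(tE n (n-1-μ)))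
        + (((n+(μ+1) : ℕ):R) - (n:R)) * ((-1:R)^(n+(n+(μ+1))) * (X:R)^(tE n (n+(μ+1))))
      = PowerSeries.C ((-1)^μ * (2*(μ:ℤ)+1)) * (X:R)^(T μ) + (gJ (μ+1) - gJ μ) := by
    intro μ hμ
    rw [Finset.mem_range] at hμ
    rw [tE_of_gt (show n-1-μ < n by omega), tE_of_le (show n ≤ n+(μ+1) by omega),
      show n-(n-1-μ)-1 = μ from by omega, show n+(μ+1)-n = μ+1 from by omega]
    have s1 : (-1:R)^(n+(n-1-μ)) = (-1:R)^(μ+1) := neg_one_pow_congr (by omega)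
    have s2 : (-1:R)^(n+(n+(μ+1))) = (-1:R)^(μ+1) := neg_one_pow_congr (by omega)
    rw [s1, s2, show n-1-μ = n - (μ+1) from by omega, Nat.cast_sub (show μ+1 ≤ n by omega)]
    simp only [gJ, map_mul, map_pow, map_neg, map_one, map_add, map_intCast, map_natCast,
      map_ofNat, Nat.cast_add, Nat.cast_one]
    ring
  rw [show 2*n+1 = n + (n+1) from by omega, Finset.sum_range_add, Finset.sum_range_succ']
  rw [← Finset.sum_range_reflect]
  simp only [add_zero, sub_self, zero_mul]
  rw [← Finset.sum_add_distrib, Finset.sum_congr rfl key, Finset.sum_add_distrib,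
    Finset.sum_range_sub gJ]
  have hg0 : gJ 0 = 0 := by simp [gJ, T]
  rw [hg0, sub_zero, gJ]

/-! ### congruence machinery -/

lemma prod_one_sub_dvd (K : ℕ) (s : Finset ℕ) (e : ℕ → ℕ) (h : ∀ k ∈ s, K ≤ e k) :
    (X:R)^K ∣ (∏ k ∈ s, (1 - (X:R)^(e k))) - 1 := by
  classical
  revert h
  induction s using Finset.induction_on with
  | empty => intro _; simp
  | @insert a s' ha ih =>
    intro hx
    rw [Finset.prod_insert ha]
    have h1 : (X:R)^K ∣ (∏ k ∈ s', (1 - (X:R)^(e k))) - 1 := ih (fun k hk => hx k (by simp [hk]))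
    have h2 : (X:R)^K ∣ (X:R)^(e a) := pow_dvd_pow _ (hx a (by simp))
    have : (1 - (X:R)^(e a)) * (∏ k ∈ s', (1 - (X:R)^(e k))) - 1
        = ((∏ k ∈ s', (1 - (X:R)^(e k))) - 1) - (X:R)^(e a) * ∏ k ∈ s', (1 - (X:R)^(e k)) := by
      ring
    rw [this]
    exact dvd_sub h1 (Dvd.dvd.mul_right h2 _)

lemma fq_congr {K a b : ℕ} (ha : K ≤ a) (hab : a ≤ b) : (X:R)^K ∣ fq b - fq a := by
  obtain ⟨d, rfl⟩ : ∃ d, b = a + d := ⟨b - a, by omega⟩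
  rw [fq, Finset.prod_range_add]
  have : (∏ k ∈ Finset.range a, (1 - (X:R)^(k+1))) = fq a := rfl
  rw [this]
  have h2 : (X:R)^K ∣ (∏ k ∈ Finset.range d, (1 - (X:R)^(a + k + 1))) - 1 :=
    prod_one_sub_dvd K _ _ (fun k _ => by omega)
  have : fq a * ∏ k ∈ Finset.range d, (1 - (X:R)^(a + k + 1)) - fq a
      = fq a * ((∏ k ∈ Finset.range d, (1 - (X:R)^(a + k + 1))) - 1) := by ring
  rw [this]
  exact Dvd.dvd.mul_left h2 _

lemma fq_congr2 {K a b : ℕ} (ha : K ≤ a) (hb : K ≤ b) : (X:R)^K ∣ fq a - fq b := by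
  rcases le_total b a with h | h
  · exact fq_congr hb h
  · exact (dvd_sub_comm).mp (fq_congr ha h)

lemma congr_mul {K : ℕ} {a b c d : R} (h1 : (X:R)^K ∣ a - b) (h2 : (X:R)^K ∣ c - d) :
    (X:R)^K ∣ a * c - b * d := by
  have : a * c - b * d = (a - b) * c + b * (c - d) := by ring
  rw [this]
  exact dvd_add (h1.mul_right _) (h2.mul_left _)

lemma euler_congr {K M : ℕ} (hM : K ≤ M) : (X:R)^K ∣ eulerProd - fq M := by
  rw [X_pow_dvd_iff]
  intro j hj
  rw [map_sub, sub_eq_zero]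
  have h1 : coeff j eulerProd = coeff j (fq (j+1)) := by
    rw [eulerProd, coeff_mk]
    congr 1
    exact Finset.prod_congr rfl (fun k _ => by rw [add_comm 1 k])
  rw [h1]
  have h2 : (X:R)^(j+1) ∣ fq M - fq (j+1) := fq_congr le_rfl (by omega)
  rw [X_pow_dvd_iff] at h2
  have := h2 j (by omega)
  rw [map_sub, sub_eq_zero] at this
  exact this.symm

/-- key term congruence -/
lemma term_congr (K : ℕ) (hK : 1 ≤ K) (m : ℕ) :
    (X:R)^K ∣ cc (2*K) m * fq (2*K) - (-1:R)^(2*K+m) * (X:R)^(tE (2*K) m) := by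
  set n := 2*K with hn
  rcases le_or_gt K (tE n m) with h | h
  · have h1 : (X:R)^K ∣ (X:R)^(tE n m) := pow_dvd_pow _ h
    apply dvd_sub
    · exact Dvd.dvd.mul_right (by rw [cc]; exact (Dvd.dvd.mul_left h1 _).mul_right _) _
    · exact Dvd.dvd.mul_left h1 _
  · -- small exponent: m and 2n - m are ≥ K
    have hm1 : K ≤ m := by
      rcases le_or_gt n m with h1 | h1
      · omega
      · rw [tE_of_gt h1] at h
        have := le_T (n - m - 1)
        omega
    have hn' : n = 2*K := hn
    have hm2 : K ≤ 2*n - m := by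
      rcases le_or_gt n m with h1 | h1
      · rw [tE_of_le h1] at h
        have := le_T (m - n)
        omega
      · omega
    have hm3 : m ≤ 2*n := by omega
    obtain ⟨u, hu⟩ := isUnit_fq m
    obtain ⟨v, hv⟩ := isUnit_fq (2*n - m)
    have hq := qb_mul_fq (2*n) m hm3
    have hqb : qb (2*n) m = ↑u⁻¹ * ↑v⁻¹ * fq (2*n) := by
      calc qb (2*n) m = qb (2*n) m * (↑u * ↑u⁻¹) * (↑v * ↑v⁻¹) := by
            rw [u.mul_inv, v.mul_inv]; ring
        _ = ↑u⁻¹ * ↑v⁻¹ * (qb (2*n) m * fq m * fq (2*n - m)) := by rw [hu, hv]; ring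
        _ = ↑u⁻¹ * ↑v⁻¹ * fq (2*n) := by rw [hq]
    have key : qb (2*n) m * fq n - 1
        = (↑u⁻¹ * ↑v⁻¹) * (fq (2*n) * fq n - fq m * fq (2*n - m)) := by
      rw [hqb, ← hu, ← hv]
      have w : ((↑u⁻¹ : R) * ↑v⁻¹) * (↑u * ↑v) = 1 := by
        calc ((↑u⁻¹ : R) * ↑v⁻¹) * (↑u * ↑v) = (↑u⁻¹ * ↑u) * (↑v⁻¹ * ↑v) := by ring
          _ = 1 := by rw [u.inv_mul, v.inv_mul, mul_one]
      linear_combination w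
    have hdvd : (X:R)^K ∣ fq (2*n) * fq n - fq m * fq (2*n - m) :=
      congr_mul (fq_congr2 (by omega) hm1) (fq_congr2 (by omega) hm2)
    have hdvd2 : (X:R)^K ∣ qb (2*n) m * fq n - 1 := by
      rw [key]; exact hdvd.mul_left _
    have : cc n m * fq n - (-1:R)^(n+m) * (X:R)^(tE n m)
        = ((-1:R)^(n+m) * (X:R)^(tE n m)) * (qb (2*n) m * fq n - 1) := by
      rw [cc]; ring
    rw [this]
    exact hdvd2.mul_left _

lemma final (N : ℕ) :
    PowerSeries.coeff N (eulerProd ^ 3) = ∑ μ ∈ Finset.range (N + 1),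
      if μ * (μ + 1) / 2 = N then (-1 : ℤ) ^ μ * (2 * μ + 1) else 0 := by
  set K := N + 1 with hK
  set n := 2 * K with hn
  have hK1 : 1 ≤ K := by omega
  have hn1 : 1 ≤ n := by omega
  -- step 1: E^3 ≡ fq n * fq n * fq (n-1)
  have h1 : (X:R)^K ∣ eulerProd ^ 3 - fq n * fq n * fq (n-1) := by
    have e3 : eulerProd ^ 3 = eulerProd * eulerProd * eulerProd := by ring
    rw [e3]
    exact congr_mul (congr_mul (euler_congr (by omega)) (euler_congr (by omega)))
      (euler_congr (by omega))
  -- step 2: exact identity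
  have h2 : fq n * fq n * fq (n-1)
      = ∑ m ∈ Finset.range (2*n+1), ((m:R) - (n:R)) * cc n m * fq n := by
    have hS : ∑ m ∈ Finset.range (2*n+1), ((m:R) - (n:R)) * cc n m = fq n * fq (n-1) := by
      have := E2 n hn1
      have h1' := E1 n hn1
      calc ∑ m ∈ Finset.range (2*n+1), ((m:R) - (n:R)) * cc n m
          = (∑ m ∈ Finset.range (2*n+1), (m:R) * cc n m)
            - (n:R) * ∑ m ∈ Finset.range (2*n+1), cc n m := by
            rw [Finset.mul_sum, ← Finset.sum_sub_distrib]
            exact Finset.sum_congr rfl (fun m _ => by ring)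
        _ = fq n * fq (n-1) := by rw [this, h1', mul_zero, sub_zero]
    calc fq n * fq n * fq (n-1) = (∑ m ∈ Finset.range (2*n+1), ((m:R) - (n:R)) * cc n m) * fq n := by
          rw [hS]; ring
      _ = _ := by rw [Finset.sum_mul]
  -- step 3: termwise congruence
  have h3 : (X:R)^K ∣ (∑ m ∈ Finset.range (2*n+1), ((m:R) - (n:R)) * cc n m * fq n)
      - ∑ m ∈ Finset.range (2*n+1), ((m:R) - (n:R)) * ((-1:R)^(n+m) * (X:R)^(tE n m)) := by
    rw [← Finset.sum_sub_distrib]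
    apply Finset.dvd_sum
    intro m _
    have : ((m:R) - (n:R)) * cc n m * fq n - ((m:R) - (n:R)) * ((-1:R)^(n+m) * (X:R)^(tE n m))
        = ((m:R) - (n:R)) * (cc n m * fq n - (-1:R)^(n+m) * (X:R)^(tE n m)) := by ring
    rw [this]
    exact (term_congr K hK1 m).mul_left _
  -- step 4: boundary term
  have h5 : (X:R)^K ∣ PowerSeries.C ((-1)^n * (n:ℤ)) * (X:R)^(T n) :=
    Dvd.dvd.mul_left (pow_dvd_pow _ (le_trans (by omega) (le_T n))) _
  -- step 6: the partial sum vs the power series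
  have h6 : (X:R)^K ∣ (∑ μ ∈ Finset.range n, PowerSeries.C ((-1)^μ * (2*(μ:ℤ)+1)) * (X:R)^(T μ))
      - PowerSeries.mk (fun N' => ∑ μ ∈ Finset.range (N' + 1),
          if μ * (μ + 1) / 2 = N' then (-1 : ℤ) ^ μ * (2 * μ + 1) else 0) := by
    rw [X_pow_dvd_iff]
    intro j hj
    rw [map_sub, sub_eq_zero, coeff_mk, map_sum]
    have hterm : ∀ μ : ℕ, (PowerSeries.coeff j) (PowerSeries.C ((-1)^μ * (2*(μ:ℤ)+1)) * (X:R)^(T μ))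
        = if μ * (μ + 1) / 2 = j then (-1 : ℤ) ^ μ * (2 * μ + 1) else 0 := by
      intro μ
      rw [coeff_C_mul_X_pow]
      have : (j = T μ) ↔ (μ * (μ + 1) / 2 = j) := by rw [T_eq]; omega
      rcases eq_or_ne j (T μ) with h | h
      · rw [if_pos h, if_pos (this.mp h)]
      · rw [if_neg h, if_neg (fun hh => h (this.mpr hh))]
    rw [Finset.sum_congr rfl (fun μ _ => hterm μ)]
    refine (Finset.sum_subset ?_ ?_).symm
    · intro x hx
      rw [Finset.mem_range] at *
      omega
    · intro x _ hx
      rw [Finset.mem_range, not_lt] at hx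
      rw [if_neg]
      intro hc
      have := le_T x
      rw [T_eq] at this
      omega
  -- assemble
  have main : (X:R)^K ∣ eulerProd ^ 3 - PowerSeries.mk (fun N' => ∑ μ ∈ Finset.range (N' + 1),
      if μ * (μ + 1) / 2 = N' then (-1 : ℤ) ^ μ * (2 * μ + 1) else 0) := by
    have hrw : eulerProd ^ 3 - PowerSeries.mk (fun N' => ∑ μ ∈ Finset.range (N' + 1),
        if μ * (μ + 1) / 2 = N' then (-1 : ℤ) ^ μ * (2 * μ + 1) else 0)
      = (eulerProd ^ 3 - fq n * fq n * fq (n-1))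
        + ((∑ m ∈ Finset.range (2*n+1), ((m:R) - (n:R)) * cc n m * fq n)
           - ∑ m ∈ Finset.range (2*n+1), ((m:R) - (n:R)) * ((-1:R)^(n+m) * (X:R)^(tE n m)))
        + PowerSeries.C ((-1)^n * (n:ℤ)) * (X:R)^(T n)
        + ((∑ μ ∈ Finset.range n, PowerSeries.C ((-1)^μ * (2*(μ:ℤ)+1)) * (X:R)^(T μ))
           - PowerSeries.mk (fun N' => ∑ μ ∈ Finset.range (N' + 1),
              if μ * (μ + 1) / 2 = N' then (-1 : ℤ) ^ μ * (2 * μ + 1) else 0)) := by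
      rw [← h2, sum_ideal n]
      ring
    rw [hrw]
    exact dvd_add (dvd_add (dvd_add h1 h3) h5) h6
  have := (X_pow_dvd_iff.mp main) N (by omega)
  rw [map_sub, sub_eq_zero] at this
  rw [this, coeff_mk]

end JacobiAux

end JacobiAux

/-- Jacobi's identity `(q;q)_∞³ = ∑_{μ≥0} (-1)^μ (2μ+1) q^{μ(μ+1)/2}`. -/
theorem jacobi_cube_identity :
    eulerProd ^ 3 =
      PowerSeries.mk (fun N => ∑ μ ∈ Finset.range (N + 1),
        if μ * (μ + 1) / 2 = N then (-1 : ℤ) ^ μ * (2 * μ + 1) else 0) := by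
  apply PowerSeries.ext
  intro N
  rw [PowerSeries.coeff_mk]
  exact JacobiAux.final N
end

section
/- For every nonnegative integer n, ∑_{d ∣ 5n+4} Re(χ(d)) = 0 and ∑_{d ∣ 5n+1} Im(χ(d)) = 0, where χ is the Dirichlet character mod 5 with χ(1)=1, χ(2)=-i, χ(3)=i, χ(4)=-1. -/
open Complex

/-- The Dirichlet character `χ_{4,5}` mod 5, with values `⟨0, 1, -i, i, -1⟩`. -/
noncomputable def chi45 (d : ℕ) : ℂ :=
  if d % 5 = 1 then 1
  else if d % 5 = 2 then -Complex.I
  else if d % 5 = 3 then Complex.I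
  else if d % 5 = 4 then -1
  else 0

lemma chi45_res (N : ℕ) (hN : N % 5 = 4 ∨ N % 5 = 1) (d : ℕ) (hd : d ∈ N.divisors) :
    (d % 5) * ((N / d) % 5) % 5 = N % 5 ∧ d % 5 < 5 ∧ (N / d) % 5 < 5 := by
  have hdvd : d ∣ N := (Nat.mem_divisors.mp hd).1
  have := Nat.div_mul_cancel hdvd
  constructor
  · rw [← Nat.mul_mod]
    rw [mul_comm] at this
    rw [this]
  · exact ⟨Nat.mod_lt _ (by norm_num), Nat.mod_lt _ (by norm_num)⟩

lemma chi45_re_sum (N : ℕ) (hN : N % 5 = 4) :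
    ∑ d ∈ N.divisors, (chi45 d).re = 0 := by
  have hN0 : N ≠ 0 := by omega
  apply Finset.sum_involution (g := fun d _ => N / d)
  · intro d hd
    obtain ⟨h1, h2, h3⟩ := chi45_res N (Or.inl hN) d hd
    rw [hN] at h1
    have hcase : (d % 5 = 1 ∧ (N/d) % 5 = 4) ∨ (d % 5 = 4 ∧ (N/d) % 5 = 1)
        ∨ (d % 5 = 2 ∧ (N/d) % 5 = 2) ∨ (d % 5 = 3 ∧ (N/d) % 5 = 3) := by
      interval_cases h : d % 5 <;> interval_cases h' : (N/d) % 5 <;> omega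
    rcases hcase with ⟨ha, hb⟩ | ⟨ha, hb⟩ | ⟨ha, hb⟩ | ⟨ha, hb⟩ <;>
      simp [chi45, ha, hb]
  · intro d hd hne heq
    apply hne
    have hdvd : d ∣ N := (Nat.mem_divisors.mp hd).1
    have hm : d * (N / d) = N := Nat.mul_div_cancel' hdvd
    rw [heq] at hm
    have h1 : (d % 5) * (d % 5) % 5 = 4 := by rw [← Nat.mul_mod, hm, hN]
    have h2 : d % 5 < 5 := Nat.mod_lt _ (by norm_num)
    have hcase : d % 5 = 2 ∨ d % 5 = 3 := by
      interval_cases h : d % 5 <;> omega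
    rcases hcase with ha | ha <;> simp [chi45, ha]
  · intro d hd
    exact Nat.mem_divisors.mpr ⟨Nat.div_dvd_of_dvd (Nat.mem_divisors.mp hd).1, hN0⟩
  · intro d hd
    exact Nat.div_div_self (Nat.mem_divisors.mp hd).1 hN0

lemma chi45_im_sum (N : ℕ) (hN : N % 5 = 1) :
    ∑ d ∈ N.divisors, (chi45 d).im = 0 := by
  have hN0 : N ≠ 0 := by omega
  apply Finset.sum_involution (g := fun d _ => N / d)
  · intro d hd
    obtain ⟨h1, h2, h3⟩ := chi45_res N (Or.inr hN) d hd
    rw [hN] at h1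
    have hcase : (d % 5 = 1 ∧ (N/d) % 5 = 1) ∨ (d % 5 = 4 ∧ (N/d) % 5 = 4)
        ∨ (d % 5 = 2 ∧ (N/d) % 5 = 3) ∨ (d % 5 = 3 ∧ (N/d) % 5 = 2) := by
      interval_cases h : d % 5 <;> interval_cases h' : (N/d) % 5 <;> omega
    rcases hcase with ⟨ha, hb⟩ | ⟨ha, hb⟩ | ⟨ha, hb⟩ | ⟨ha, hb⟩ <;>
      simp [chi45, ha, hb]
  · intro d hd hne heq
    apply hne
    have hdvd : d ∣ N := (Nat.mem_divisors.mp hd).1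
    have hm : d * (N / d) = N := Nat.mul_div_cancel' hdvd
    rw [heq] at hm
    have h1 : (d % 5) * (d % 5) % 5 = 1 := by rw [← Nat.mul_mod, hm, hN]
    have h2 : d % 5 < 5 := Nat.mod_lt _ (by norm_num)
    have hcase : d % 5 = 1 ∨ d % 5 = 4 := by
      interval_cases h : d % 5 <;> omega
    rcases hcase with ha | ha <;> simp [chi45, ha]
  · intro d hd
    exact Nat.mem_divisors.mpr ⟨Nat.div_dvd_of_dvd (Nat.mem_divisors.mp hd).1, hN0⟩
  · intro d hd
    exact Nat.div_div_self (Nat.mem_divisors.mp hd).1 hN0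

/-- For every `n ≥ 0`, `∑_{d ∣ 5n+4} Re χ_{4,5}(d) = 0` and `∑_{d ∣ 5n+1} Im χ_{4,5}(d) = 0`. -/
theorem chi45_divisor_sum_vanishing (n : ℕ) :
    (∑ d ∈ (5 * n + 4).divisors, (chi45 d).re) = 0 ∧
    (∑ d ∈ (5 * n + 1).divisors, (chi45 d).im) = 0 := by
  exact ⟨chi45_re_sum _ (by omega), chi45_im_sum _ (by omega)⟩
end

section
/- Ramanujan's differential equations: with E₂(q) = 1 - 24∑_{n≥1} σ₁(n)qⁿ, E₄(q) = 1 + 240∑_{n≥1} σ₃(n)qⁿ, E₆(q) = 1 - 504∑_{n≥1} σ₅(n)qⁿ as formal power series, one has q·dE₂/dq = (E₂² - E₄)/12, q·dE₄/dq = (E₂E₄ - E₆)/3, and q·dE₆/dq = (E₂E₆ - E₄²)/2. -/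
open PowerSeries Finset

/-- The Eisenstein series `E₂ = 1 - 24 ∑ σ₁(n)qⁿ` as a formal power series over `ℚ`. -/
noncomputable def E2 : PowerSeries ℚ :=
  PowerSeries.mk fun n => if n = 0 then 1 else -24 * ∑ d ∈ n.divisors, (d : ℚ)

/-- The Eisenstein series `E₄ = 1 + 240 ∑ σ₃(n)qⁿ` as a formal power series over `ℚ`. -/
noncomputable def E4 : PowerSeries ℚ :=
  PowerSeries.mk fun n => if n = 0 then 1 else 240 * ∑ d ∈ n.divisors, (d : ℚ) ^ 3

/-- The Eisenstein series `E₆ = 1 - 504 ∑ σ₅(n)qⁿ` as a formal power series over `ℚ`. -/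
noncomputable def E6 : PowerSeries ℚ :=
  PowerSeries.mk fun n => if n = 0 then 1 else -504 * ∑ d ∈ n.divisors, (d : ℚ) ^ 5

/-- The operator `q·d/dq` on formal power series. -/
noncomputable def qDeriv (f : PowerSeries ℚ) : PowerSeries ℚ :=
  PowerSeries.mk fun n => (n : ℚ) * PowerSeries.coeff n f

namespace Rama

def sols (n : ℕ) : Finset ((ℕ × ℕ) × ℕ × ℕ) :=
  (((Ioc 0 n) ×ˢ (Ioc 0 n)) ×ˢ ((Ioc 0 n) ×ˢ (Ioc 0 n))).filter
    fun t => t.1.1 * t.1.2 + t.2.1 * t.2.2 = n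

lemma mem_sols {n : ℕ} {t : (ℕ × ℕ) × ℕ × ℕ} :
    t ∈ sols n ↔ (0 < t.1.1 ∧ 0 < t.1.2 ∧ 0 < t.2.1 ∧ 0 < t.2.2) ∧
      t.1.1 * t.1.2 + t.2.1 * t.2.2 = n := by
  obtain ⟨⟨a, x⟩, b, y⟩ := t
  simp only [sols, mem_filter, mem_product, mem_Ioc]
  constructor
  · rintro ⟨⟨⟨⟨ha,_⟩,hx,_⟩,⟨hb,_⟩,hy,_⟩, he⟩
    exact ⟨⟨ha,hx,hb,hy⟩, he⟩
  · rintro ⟨⟨ha,hx,hb,hy⟩, he⟩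
    refine ⟨⟨⟨⟨ha,?_⟩,hx,?_⟩,⟨hb,?_⟩,hy,?_⟩, he⟩ <;> nlinarith

/-- Decomposition of the solution set by the value of `a*x`. -/
lemma conv_decomp (n : ℕ) (F : (ℕ×ℕ)×ℕ×ℕ → ℚ) :
    ∑ t ∈ sols n, F t
      = ∑ m ∈ Ico 1 n, ∑ u ∈ Nat.divisorsAntidiagonal m ×ˢ Nat.divisorsAntidiagonal (n - m),
          F u := by
  rw [← Finset.sum_sigma ((Ico 1 n))
    (fun m => Nat.divisorsAntidiagonal m ×ˢ Nat.divisorsAntidiagonal (n - m)) (fun z => F z.2)]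
  refine Finset.sum_nbij' (fun t => ⟨t.1.1*t.1.2, t⟩) (fun z => z.2) ?_ ?_ ?_ ?_ ?_
  · rintro ⟨⟨a,x⟩,b,y⟩ ht
    obtain ⟨⟨ha,hx,hb,hy⟩, he⟩ := mem_sols.mp ht
    have he' : a * x + b * y = n := he
    have hax : 0 < a*x := Nat.mul_pos ha hx
    have hby : 0 < b*y := Nat.mul_pos hb hy
    clear he ht
    simp only [Finset.mem_sigma, Finset.mem_product, Nat.mem_divisorsAntidiagonal, mem_Ico]
    refine ⟨⟨by omega, by omega⟩, ⟨trivial, by omega⟩, by omega, by omega⟩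
  · rintro ⟨m, ⟨a,x⟩,b,y⟩ hz
    simp only [Finset.mem_sigma, Finset.mem_product, Nat.mem_divisorsAntidiagonal, mem_Ico] at hz
    obtain ⟨⟨hm1, hmn⟩, ⟨hax, hm0⟩, hby, hnm0⟩ := hz
    have ha : 0 < a := Nat.pos_of_ne_zero (fun h => by simp [h] at hax; omega)
    have hx : 0 < x := Nat.pos_of_ne_zero (fun h => by simp [h] at hax; omega)
    have hb : 0 < b := Nat.pos_of_ne_zero (fun h => by simp [h] at hby; omega)
    have hy : 0 < y := Nat.pos_of_ne_zero (fun h => by simp [h] at hby; omega)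
    exact mem_sols.mpr ⟨⟨ha,hx,hb,hy⟩, show a*x + b*y = n by omega⟩
  · intro t ht; rfl
  · rintro ⟨m, ⟨a,x⟩,b,y⟩ hz
    simp only [Finset.mem_sigma, Finset.mem_product, Nat.mem_divisorsAntidiagonal, mem_Ico] at hz
    obtain ⟨_, ⟨hax, _⟩, _, _⟩ := hz
    simp [hax]
  · intro t ht; rfl

/-- The diagonal `x = y` as a divisor sum. -/
lemma diag_xy (n : ℕ) (F : (ℕ×ℕ)×ℕ×ℕ → ℚ) :
    ∑ t ∈ (sols n).filter (fun t => t.1.2 = t.2.2), F t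
      = ∑ de ∈ Nat.divisorsAntidiagonal n, ∑ a ∈ Ico 1 de.1, F ((a, de.2), (de.1 - a, de.2)) := by
  rw [← Finset.sum_sigma (Nat.divisorsAntidiagonal n) (fun de => Ico 1 de.1)
      (fun z => F ((z.2, z.1.2), (z.1.1 - z.2, z.1.2)))]
  refine (Finset.sum_nbij' (fun z => ((z.2, z.1.2), (z.1.1 - z.2, z.1.2)))
      (fun t => ⟨(t.1.1 + t.2.1, t.1.2), t.1.1⟩) ?_ ?_ ?_ ?_ ?_).symm
  · rintro ⟨⟨d,e⟩, a⟩ hz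
    simp only [Finset.mem_sigma, Nat.mem_divisorsAntidiagonal, mem_Ico] at hz
    obtain ⟨⟨hde, hn0⟩, ha1, had⟩ := hz
    have he : 0 < e := Nat.pos_of_ne_zero (fun h => by simp [h] at hde; omega)
    rw [mem_filter]
    refine ⟨mem_sols.mpr ⟨⟨show 0 < a by omega, show 0 < e by omega,
      show 0 < d - a by omega, show 0 < e by omega⟩, ?_⟩, rfl⟩
    show a * e + (d - a) * e = n
    rw [← Nat.add_mul]
    have h2 : a + (d - a) = d := by omega
    rw [h2, hde]
  · rintro ⟨⟨a,x⟩,b,y⟩ ht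
    rw [mem_filter] at ht
    obtain ⟨hs, hxy⟩ := ht
    obtain ⟨⟨ha,hx,hb,hy⟩, he⟩ := mem_sols.mp hs
    replace ha : 0 < a := ha
    replace hx : 0 < x := hx
    replace hb : 0 < b := hb
    replace hy : 0 < y := hy
    have he' : a * x + b * y = n := he
    have hxy' : x = y := hxy
    clear he hxy hs
    subst hxy'
    have hax : 0 < a * x := Nat.mul_pos ha hx
    have hbx : 0 < b * x := Nat.mul_pos hb hx
    simp only [Finset.mem_sigma, Nat.mem_divisorsAntidiagonal, mem_Ico]
    refine ⟨⟨?_, ?_⟩, ?_, ?_⟩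
    · show (a + b) * x = n
      rw [Nat.add_mul]; omega
    · omega
    · show 1 ≤ a; omega
    · show a < a + b; omega
  · rintro ⟨⟨d,e⟩, a⟩ hz
    simp only [Finset.mem_sigma, Nat.mem_divisorsAntidiagonal, mem_Ico] at hz
    obtain ⟨⟨hde, hn0⟩, ha1, had⟩ := hz
    show (⟨(a + (d - a), e), a⟩ : Σ _ : ℕ × ℕ, ℕ) = ⟨(d, e), a⟩
    have h2 : a + (d - a) = d := by omega
    rw [h2]
  · rintro ⟨⟨a,x⟩,b,y⟩ ht
    rw [mem_filter] at ht
    have hxy : x = y := ht.2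
    show ((a, x), (a + b - a, x)) = ((a,x),(b,y))
    have h1 : a + b - a = b := by omega
    rw [h1, hxy]
  · rintro ⟨⟨d,e⟩, a⟩ hz; rfl

/-- The diagonal `a = b` as a divisor sum. -/
lemma diag_ab (n : ℕ) (F : (ℕ×ℕ)×ℕ×ℕ → ℚ) :
    ∑ t ∈ (sols n).filter (fun t => t.1.1 = t.2.1), F t
      = ∑ de ∈ Nat.divisorsAntidiagonal n, ∑ x ∈ Ico 1 de.2, F ((de.1, x), (de.1, de.2 - x)) := by
  rw [← Finset.sum_sigma (Nat.divisorsAntidiagonal n) (fun de => Ico 1 de.2)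
      (fun z => F ((z.1.1, z.2), (z.1.1, z.1.2 - z.2)))]
  refine (Finset.sum_nbij' (fun z => ((z.1.1, z.2), (z.1.1, z.1.2 - z.2)))
      (fun t => ⟨(t.1.1, t.1.2 + t.2.2), t.1.2⟩) ?_ ?_ ?_ ?_ ?_).symm
  · rintro ⟨⟨d,e⟩, x⟩ hz
    simp only [Finset.mem_sigma, Nat.mem_divisorsAntidiagonal, mem_Ico] at hz
    obtain ⟨⟨hde, hn0⟩, hx1, hxe⟩ := hz
    have hd : 0 < d := Nat.pos_of_ne_zero (fun h => by simp [h] at hde; omega)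
    rw [mem_filter]
    refine ⟨mem_sols.mpr ⟨⟨show 0 < d by omega, show 0 < x by omega,
      show 0 < d by omega, show 0 < e - x by omega⟩, ?_⟩, rfl⟩
    show d * x + d * (e - x) = n
    rw [← Nat.mul_add]
    have h2 : x + (e - x) = e := by omega
    rw [h2, hde]
  · rintro ⟨⟨a,x⟩,b,y⟩ ht
    rw [mem_filter] at ht
    obtain ⟨hs, hab⟩ := ht
    obtain ⟨⟨ha,hx,hb,hy⟩, he⟩ := mem_sols.mp hs
    replace ha : 0 < a := ha
    replace hx : 0 < x := hx
    replace hb : 0 < b := hb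
    replace hy : 0 < y := hy
    have he' : a * x + b * y = n := he
    have hab' : a = b := hab
    clear he hab hs
    subst hab'
    have hax : 0 < a * x := Nat.mul_pos ha hx
    have hay : 0 < a * y := Nat.mul_pos ha hy
    simp only [Finset.mem_sigma, Nat.mem_divisorsAntidiagonal, mem_Ico]
    refine ⟨⟨?_, ?_⟩, ?_, ?_⟩
    · show a * (x + y) = n
      rw [Nat.mul_add]; omega
    · omega
    · show 1 ≤ x; omega
    · show x < x + y; omega
  · rintro ⟨⟨d,e⟩, x⟩ hz
    simp only [Finset.mem_sigma, Nat.mem_divisorsAntidiagonal, mem_Ico] at hz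
    obtain ⟨⟨hde, hn0⟩, hx1, hxe⟩ := hz
    show (⟨(d, x + (e - x)), x⟩ : Σ _ : ℕ × ℕ, ℕ) = ⟨(d, e), x⟩
    have h2 : x + (e - x) = e := by omega
    rw [h2]
  · rintro ⟨⟨a,x⟩,b,y⟩ ht
    rw [mem_filter] at ht
    have hab : a = b := ht.2
    show ((a, x), (a, x + y - x)) = ((a,x),(b,y))
    have h1 : x + y - x = y := by omega
    rw [h1, hab]
  · rintro ⟨⟨d,e⟩, x⟩ hz; rfl

/-- Euclid-type bijection between the region `x < y` and the region `b < a`. -/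
lemma euclid₁ (n : ℕ) (f : ℕ → ℕ → ℚ) :
    ∑ t ∈ (sols n).filter (fun t => t.1.2 < t.2.2), f t.1.1 t.2.1
      = ∑ t ∈ (sols n).filter (fun t => t.2.1 < t.1.1), f (t.1.1 - t.2.1) t.2.1 := by
  refine Finset.sum_nbij' (fun t => ((t.1.1 + t.2.1, t.1.2), (t.2.1, t.2.2 - t.1.2)))
    (fun t => ((t.1.1 - t.2.1, t.1.2), (t.2.1, t.2.2 + t.1.2))) ?_ ?_ ?_ ?_ ?_
  · rintro ⟨⟨a,x⟩,b,y⟩ ht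
    rw [mem_filter] at ht
    obtain ⟨hs, hlt⟩ := ht
    obtain ⟨⟨ha,hx,hb,hy⟩, he⟩ := mem_sols.mp hs
    replace ha : 0 < a := ha; replace hx : 0 < x := hx
    replace hb : 0 < b := hb; replace hy : 0 < y := hy
    have he' : a * x + b * y = n := he
    have hlt' : x < y := hlt
    clear he hlt hs
    rw [mem_filter]
    have key : (a + b) * x + b * (y - x) = n := by
      rw [Nat.add_mul, Nat.mul_sub]
      have hbx : b * x ≤ b * y := Nat.mul_le_mul_left b (le_of_lt hlt')
      omega
    refine ⟨mem_sols.mpr ⟨⟨show 0 < a + b by omega, show 0 < x by omega,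
      show 0 < b by omega, show 0 < y - x by omega⟩, key⟩, show b < a + b by omega⟩
  · rintro ⟨⟨a,x⟩,b,y⟩ ht
    rw [mem_filter] at ht
    obtain ⟨hs, hlt⟩ := ht
    obtain ⟨⟨ha,hx,hb,hy⟩, he⟩ := mem_sols.mp hs
    replace ha : 0 < a := ha; replace hx : 0 < x := hx
    replace hb : 0 < b := hb; replace hy : 0 < y := hy
    have he' : a * x + b * y = n := he
    have hlt' : b < a := hlt
    clear he hlt hs
    rw [mem_filter]
    have key : (a - b) * x + b * (y + x) = n := by
      rw [Nat.sub_mul, Nat.mul_add]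
      have hbx : b * x ≤ a * x := Nat.mul_le_mul_right x (le_of_lt hlt')
      omega
    refine ⟨mem_sols.mpr ⟨⟨show 0 < a - b by omega, show 0 < x by omega,
      show 0 < b by omega, show 0 < y + x by omega⟩, key⟩, show x < y + x by omega⟩
  · rintro ⟨⟨a,x⟩,b,y⟩ ht
    rw [mem_filter] at ht
    have hlt : x < y := ht.2
    show ((a + b - b, x), (b, y - x + x)) = ((a,x),(b,y))
    have h1 : a + b - b = a := by omega
    have h2 : y - x + x = y := by omega
    rw [h1, h2]
  · rintro ⟨⟨a,x⟩,b,y⟩ ht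
    rw [mem_filter] at ht
    have hlt : b < a := ht.2
    show ((a - b + b, x), (b, y + x - x)) = ((a,x),(b,y))
    have h1 : a - b + b = a := by omega
    have h2 : y + x - x = y := by omega
    rw [h1, h2]
  · rintro ⟨⟨a,x⟩,b,y⟩ ht
    show f a b = f (a + b - b) b
    rw [Nat.add_sub_cancel]

/-- Euclid-type bijection between the region `y < x` and the region `a < b`. -/
lemma euclid₂ (n : ℕ) (f : ℕ → ℕ → ℚ) :
    ∑ t ∈ (sols n).filter (fun t => t.2.2 < t.1.2), f t.1.1 t.2.1
      = ∑ t ∈ (sols n).filter (fun t => t.1.1 < t.2.1), f t.1.1 (t.2.1 - t.1.1) := by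
  refine Finset.sum_nbij' (fun t => ((t.1.1, t.1.2 - t.2.2), (t.1.1 + t.2.1, t.2.2)))
    (fun t => ((t.1.1, t.1.2 + t.2.2), (t.2.1 - t.1.1, t.2.2))) ?_ ?_ ?_ ?_ ?_
  · rintro ⟨⟨a,x⟩,b,y⟩ ht
    rw [mem_filter] at ht
    obtain ⟨hs, hlt⟩ := ht
    obtain ⟨⟨ha,hx,hb,hy⟩, he⟩ := mem_sols.mp hs
    replace ha : 0 < a := ha; replace hx : 0 < x := hx
    replace hb : 0 < b := hb; replace hy : 0 < y := hy
    have he' : a * x + b * y = n := he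
    have hlt' : y < x := hlt
    clear he hlt hs
    rw [mem_filter]
    have key : a * (x - y) + (a + b) * y = n := by
      rw [Nat.add_mul, Nat.mul_sub]
      have hay : a * y ≤ a * x := Nat.mul_le_mul_left a (le_of_lt hlt')
      omega
    refine ⟨mem_sols.mpr ⟨⟨show 0 < a by omega, show 0 < x - y by omega,
      show 0 < a + b by omega, show 0 < y by omega⟩, key⟩, show a < a + b by omega⟩
  · rintro ⟨⟨a,x⟩,b,y⟩ ht
    rw [mem_filter] at ht
    obtain ⟨hs, hlt⟩ := ht
    obtain ⟨⟨ha,hx,hb,hy⟩, he⟩ := mem_sols.mp hs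
    replace ha : 0 < a := ha; replace hx : 0 < x := hx
    replace hb : 0 < b := hb; replace hy : 0 < y := hy
    have he' : a * x + b * y = n := he
    have hlt' : a < b := hlt
    clear he hlt hs
    rw [mem_filter]
    have key : a * (x + y) + (b - a) * y = n := by
      rw [Nat.sub_mul, Nat.mul_add]
      have hay : a * y ≤ b * y := Nat.mul_le_mul_right y (le_of_lt hlt')
      omega
    refine ⟨mem_sols.mpr ⟨⟨show 0 < a by omega, show 0 < x + y by omega,
      show 0 < b - a by omega, show 0 < y by omega⟩, key⟩, show y < x + y by omega⟩
  · rintro ⟨⟨a,x⟩,b,y⟩ ht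
    rw [mem_filter] at ht
    have hlt : y < x := ht.2
    show ((a, x - y + y), (a + b - a, y)) = ((a,x),(b,y))
    have h1 : x - y + y = x := by omega
    have h2 : a + b - a = b := by omega
    rw [h1, h2]
  · rintro ⟨⟨a,x⟩,b,y⟩ ht
    rw [mem_filter] at ht
    have hlt : a < b := ht.2
    show ((a, x + y - y), (a + (b - a), y)) = ((a,x),(b,y))
    have h1 : x + y - y = x := by omega
    have h2 : a + (b - a) = b := by omega
    rw [h1, h2]
  · rintro ⟨⟨a,x⟩,b,y⟩ ht
    show f a b = f a (a + b - a)
    rw [Nat.add_sub_cancel_left]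

/-- Trichotomy splitting of a sum over a finset. -/
lemma sum_trichot {α : Type*} [DecidableEq α] (s : Finset α) (f : α → ℚ) (g h : α → ℕ) :
    ∑ t ∈ s, f t = (∑ t ∈ s.filter (fun t => g t < h t), f t)
      + (∑ t ∈ s.filter (fun t => h t < g t), f t)
      + ∑ t ∈ s.filter (fun t => g t = h t), f t := by
  classical
  rw [← Finset.sum_filter_add_sum_filter_not s (fun t => g t = h t)]
  have hsplit : ∑ t ∈ s.filter (fun t => ¬ g t = h t), f t
      = (∑ t ∈ s.filter (fun t => g t < h t), f t)
        + ∑ t ∈ s.filter (fun t => h t < g t), f t := by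
    rw [← Finset.sum_filter_add_sum_filter_not (s.filter (fun t => ¬ g t = h t))
      (fun t => g t < h t), Finset.filter_filter, Finset.filter_filter]
    congr 1
    · apply Finset.sum_congr _ (fun _ _ => rfl)
      apply Finset.filter_congr
      intro t _
      constructor
      · rintro ⟨_, h2⟩; exact h2
      · intro h2; exact ⟨by omega, h2⟩
    · apply Finset.sum_congr _ (fun _ _ => rfl)
      apply Finset.filter_congr
      intro t _
      constructor
      · rintro ⟨h1, h2⟩; omega
      · intro h2; refine ⟨by omega, by omega⟩
  rw [hsplit]; ring

/-- The key identity: off-diagonal sums of `p` over `sols n` reduce to divisor sums. -/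
theorem key (n : ℕ) (v p : ℕ → ℕ → ℚ) (hsym : ∀ a b, v a b = v b a)
    (hp : ∀ a b, v a b - v (a + b) b = p (a + b) b) (hpsym : ∀ a b, p a b = p b a) :
    ∑ t ∈ (sols n).filter (fun t => ¬ t.1.1 = t.2.1), p t.1.1 t.2.1
      = (∑ de ∈ Nat.divisorsAntidiagonal n, ∑ x ∈ Ico 1 de.2, v de.1 de.1)
        - ∑ de ∈ Nat.divisorsAntidiagonal n, ∑ a ∈ Ico 1 de.1, v a (de.1 - a) := by
  classical
  have T1 := sum_trichot (sols n) (fun t => v t.1.1 t.2.1) (fun t => t.1.2) (fun t => t.2.2)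
  have T2 := sum_trichot (sols n) (fun t => v t.1.1 t.2.1) (fun t => t.1.1) (fun t => t.2.1)
  have T3 := sum_trichot (sols n) (fun t => p t.1.1 t.2.1) (fun t => t.1.1) (fun t => t.2.1)
  have T4 := Finset.sum_filter_add_sum_filter_not (sols n) (fun t => t.1.1 = t.2.1)
    (fun t => p t.1.1 t.2.1)
  have E1 : ∑ t ∈ (sols n).filter (fun t => t.1.2 < t.2.2), v t.1.1 t.2.1
      = (∑ t ∈ (sols n).filter (fun t => t.2.1 < t.1.1), v t.1.1 t.2.1)
        + ∑ t ∈ (sols n).filter (fun t => t.2.1 < t.1.1), p t.1.1 t.2.1 := by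
    rw [euclid₁ n v, ← Finset.sum_add_distrib]
    apply Finset.sum_congr rfl
    intro t ht
    rw [mem_filter] at ht
    have hlt : t.2.1 < t.1.1 := ht.2
    have h := hp (t.1.1 - t.2.1) t.2.1
    rw [Nat.sub_add_cancel (le_of_lt hlt)] at h
    linarith
  have E2 : ∑ t ∈ (sols n).filter (fun t => t.2.2 < t.1.2), v t.1.1 t.2.1
      = (∑ t ∈ (sols n).filter (fun t => t.1.1 < t.2.1), v t.1.1 t.2.1)
        + ∑ t ∈ (sols n).filter (fun t => t.1.1 < t.2.1), p t.1.1 t.2.1 := by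
    rw [euclid₂ n v, ← Finset.sum_add_distrib]
    apply Finset.sum_congr rfl
    intro t ht
    rw [mem_filter] at ht
    have hlt : t.1.1 < t.2.1 := ht.2
    have h := hp (t.2.1 - t.1.1) t.1.1
    rw [Nat.sub_add_cancel (le_of_lt hlt)] at h
    rw [hsym t.1.1 (t.2.1 - t.1.1), hsym t.1.1 t.2.1, hpsym t.1.1 t.2.1]
    linarith
  have D1 := diag_ab n (fun t => v t.1.1 t.2.1)
  have D2 := diag_xy n (fun t => v t.1.1 t.2.1)
  simp only at D1 D2 E1 E2 T1 T2 T3 T4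
  linarith

/-- `sig k n = σ_k(n)` as a rational number. -/
noncomputable def sig (k n : ℕ) : ℚ := ∑ d ∈ n.divisors, (d:ℚ)^k

lemma sig_dA (k n : ℕ) : ∑ de ∈ Nat.divisorsAntidiagonal n, ((de.1:ℚ))^k = sig k n :=
  Nat.sum_divisorsAntidiagonal (fun d _e => (d:ℚ)^k)

lemma nsig (k n : ℕ) :
    ∑ de ∈ Nat.divisorsAntidiagonal n, (de.1:ℚ)^(k+1) * (de.2:ℚ) = (n:ℚ) * sig k n := by
  have h : ∀ de ∈ Nat.divisorsAntidiagonal n, (de.1:ℚ)^(k+1) * (de.2:ℚ) = (n:ℚ) * (de.1:ℚ)^k := by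
    intro de hde
    obtain ⟨h1, _⟩ := Nat.mem_divisorsAntidiagonal.mp hde
    have h2 : ((de.1 : ℚ)) * (de.2 : ℚ) = (n:ℚ) := by exact_mod_cast congrArg (Nat.cast : ℕ → ℚ) h1
    rw [pow_succ]
    linear_combination (de.1:ℚ)^k * h2
  rw [Finset.sum_congr rfl h, ← Finset.mul_sum, sig_dA]

lemma sum_range_pow1 (d : ℕ) : ∑ a ∈ range d, (a:ℚ)^1 = ((d:ℚ)^2 - d)/2 := by
  induction d with
  | zero => simp
  | succ d ih => rw [Finset.sum_range_succ, ih]; push_cast; ring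

lemma sum_range_pow2 (d : ℕ) : ∑ a ∈ range d, (a:ℚ)^2 = (2*(d:ℚ)^3 - 3*(d:ℚ)^2 + d)/6 := by
  induction d with
  | zero => simp
  | succ d ih => rw [Finset.sum_range_succ, ih]; push_cast; ring

lemma sum_range_pow3 (d : ℕ) : ∑ a ∈ range d, (a:ℚ)^3 = ((d:ℚ)^4 - 2*(d:ℚ)^3 + (d:ℚ)^2)/4 := by
  induction d with
  | zero => simp
  | succ d ih => rw [Finset.sum_range_succ, ih]; push_cast; ring

lemma sum_range_pow4 (d : ℕ) :
    ∑ a ∈ range d, (a:ℚ)^4 = (6*(d:ℚ)^5 - 15*(d:ℚ)^4 + 10*(d:ℚ)^3 - d)/30 := by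
  induction d with
  | zero => simp
  | succ d ih => rw [Finset.sum_range_succ, ih]; push_cast; ring

lemma sum_range_pow5 (d : ℕ) :
    ∑ a ∈ range d, (a:ℚ)^5 = (2*(d:ℚ)^6 - 6*(d:ℚ)^5 + 5*(d:ℚ)^4 - (d:ℚ)^2)/12 := by
  induction d with
  | zero => simp
  | succ d ih => rw [Finset.sum_range_succ, ih]; push_cast; ring

lemma sum_range_pow6 (d : ℕ) :
    ∑ a ∈ range d, (a:ℚ)^6
      = (6*(d:ℚ)^7 - 21*(d:ℚ)^6 + 21*(d:ℚ)^5 - 7*(d:ℚ)^3 + d)/42 := by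
  induction d with
  | zero => simp
  | succ d ih => rw [Finset.sum_range_succ, ih]; push_cast; ring

lemma ico_pow (j d : ℕ) (hj : j ≠ 0) :
    ∑ a ∈ Ico 1 d, (a:ℚ)^j = ∑ a ∈ range d, (a:ℚ)^j := by
  rcases Nat.eq_zero_or_pos d with h | h
  · subst h; rfl
  · have hr : range d = insert 0 (Ico 1 d) := by
      ext a; simp only [mem_range, mem_insert, mem_Ico]; omega
    rw [hr, Finset.sum_insert (by simp)]
    simp [zero_pow hj]

lemma ico_const (c : ℚ) (d : ℕ) (hd : 1 ≤ d) : ∑ _a ∈ Ico 1 d, c = ((d:ℚ) - 1) * c := by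
  rw [Finset.sum_const, Nat.card_Ico, nsmul_eq_mul, Nat.cast_sub hd]
  push_cast; ring


lemma dA_pos {n : ℕ} {de : ℕ × ℕ} (h : de ∈ Nat.divisorsAntidiagonal n) :
    1 ≤ de.1 ∧ 1 ≤ de.2 := by
  obtain ⟨h1, h0⟩ := Nat.mem_divisorsAntidiagonal.mp h
  constructor
  · rcases Nat.eq_zero_or_pos de.1 with h2 | h2
    · rw [h2, zero_mul] at h1; exact absurd h1.symm h0
    · exact h2
  · rcases Nat.eq_zero_or_pos de.2 with h2 | h2
    · rw [h2, mul_zero] at h1; exact absurd h1.symm h0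
    · exact h2

noncomputable def v1 (a b : ℕ) : ℚ := -((a:ℚ)^2 + a*b + b^2)/2
noncomputable def p1 (a b : ℕ) : ℚ := (a:ℚ) * b

lemma v1_sym : ∀ a b : ℕ, v1 a b = v1 b a := by intro a b; unfold v1; ring
lemma p1_sym : ∀ a b : ℕ, p1 a b = p1 b a := by intro a b; unfold p1; ring
lemma v1_p : ∀ a b : ℕ, v1 a b - v1 (a + b) b = p1 (a + b) b := by
  intro a b; unfold v1 p1; push_cast; ring

lemma inner1 (d : ℕ) (hd : 1 ≤ d) :
    ∑ a ∈ Ico 1 d, v1 a (d - a)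
      = (-1/12)*(d:ℚ) + (1/2)*(d:ℚ)^2 + (-5/12)*(d:ℚ)^3 := by
  have h1 : ∀ a ∈ Ico 1 d, v1 a (d - a)
      = (-1/2)*(d:ℚ)^2 + ((1/2)*(d:ℚ))*(a:ℚ)^1 + (-1/2)*(a:ℚ)^2 := by
    intro a ha; rw [mem_Ico] at ha
    unfold v1
    rw [Nat.cast_sub (by omega : a ≤ d)]
    ring
  calc ∑ a ∈ Ico 1 d, v1 a (d - a)
      = ∑ a ∈ Ico 1 d, ((-1/2)*(d:ℚ)^2 + ((1/2)*(d:ℚ))*(a:ℚ)^1 + (-1/2)*(a:ℚ)^2) :=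
        Finset.sum_congr rfl h1
    _ = (∑ _a ∈ Ico 1 d, ((-1/2)*(d:ℚ)^2)) + (((1/2)*(d:ℚ)) * ∑ a ∈ Ico 1 d, (a:ℚ)^1)
        + ((-1/2) * ∑ a ∈ Ico 1 d, (a:ℚ)^2) := by
        rw [Finset.mul_sum, Finset.mul_sum, ← Finset.sum_add_distrib, ← Finset.sum_add_distrib]
    _ = (-1/12)*(d:ℚ) + (1/2)*(d:ℚ)^2 + (-5/12)*(d:ℚ)^3 := by
        rw [ico_const _ d hd, ico_pow 1 d one_ne_zero, ico_pow 2 d (by norm_num),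
          sum_range_pow1, sum_range_pow2]
        ring

lemma identity1 (n : ℕ) :
    ∑ m ∈ Ico 1 n, sig 1 m * sig 1 (n - m)
      = 5/12 * sig 3 n + 1/12 * sig 1 n - 1/2 * ((n:ℚ) * sig 1 n) := by
  have hA : ∑ t ∈ sols n, p1 t.1.1 t.2.1 = ∑ m ∈ Ico 1 n, sig 1 m * sig 1 (n - m) := by
    rw [conv_decomp n (fun t => p1 t.1.1 t.2.1)]
    apply Finset.sum_congr rfl
    intro m _
    rw [← sig_dA 1 m, ← sig_dA 1 (n - m), Finset.sum_mul_sum, Finset.sum_product]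
    apply Finset.sum_congr rfl; intro x _
    apply Finset.sum_congr rfl; intro y _
    show p1 x.1 y.1 = (x.1:ℚ)^1 * (y.1:ℚ)^1
    unfold p1; ring
  have hB : ∑ t ∈ sols n, p1 t.1.1 t.2.1
      = (∑ t ∈ (sols n).filter (fun t => t.1.1 = t.2.1), p1 t.1.1 t.2.1)
        + ∑ t ∈ (sols n).filter (fun t => ¬ t.1.1 = t.2.1), p1 t.1.1 t.2.1 :=
    (Finset.sum_filter_add_sum_filter_not (sols n) (fun t => t.1.1 = t.2.1)
      (fun t => p1 t.1.1 t.2.1)).symm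
  have hC := key n v1 p1 v1_sym v1_p p1_sym
  have hD : ∑ t ∈ (sols n).filter (fun t => t.1.1 = t.2.1), p1 t.1.1 t.2.1
      = ∑ de ∈ Nat.divisorsAntidiagonal n, ∑ _x ∈ Ico 1 de.2, p1 de.1 de.1 :=
    diag_ab n (fun t => p1 t.1.1 t.2.1)
  rw [← hA, hB, hC, hD]
  rw [← nsig 1 n, ← sig_dA 3 n, ← sig_dA 1 n, Finset.mul_sum, Finset.mul_sum, Finset.mul_sum,
    ← Finset.sum_sub_distrib, ← Finset.sum_add_distrib, ← Finset.sum_add_distrib,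
    ← Finset.sum_sub_distrib]
  apply Finset.sum_congr rfl
  intro de hde
  obtain ⟨hd1, he1⟩ := dA_pos hde
  rw [ico_const _ _ he1, ico_const _ _ he1, inner1 _ hd1]
  unfold p1 v1
  ring


lemma conv_comm (r s n : ℕ) :
    ∑ m ∈ Ico 1 n, sig r m * sig s (n - m) = ∑ m ∈ Ico 1 n, sig s m * sig r (n - m) := by
  refine Finset.sum_nbij' (fun m => n - m) (fun m => n - m) ?_ ?_ ?_ ?_ ?_ <;>
    intro m hm <;> rw [mem_Ico] at hm
  · show n - m ∈ Ico 1 n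
    rw [mem_Ico]; omega
  · show n - m ∈ Ico 1 n
    rw [mem_Ico]; omega
  · show n - (n - m) = m
    omega
  · show n - (n - m) = m
    omega
  · show sig r m * sig s (n - m) = sig s (n - m) * sig r (n - (n - m))
    rw [(by omega : n - (n - m) = m)]; ring

noncomputable def v2 (a b : ℕ) : ℚ :=
  -((a:ℚ)^4 + 2*(a:ℚ)^3*b + 3*(a:ℚ)^2*(b:ℚ)^2 + 2*a*(b:ℚ)^3 + (b:ℚ)^4)/4
noncomputable def p2 (a b : ℕ) : ℚ := (a:ℚ)^3*b + a*(b:ℚ)^3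
noncomputable def v3 (a b : ℕ) : ℚ :=
  -(2*(a:ℚ)^6 + 6*(a:ℚ)^5*b + 5*(a:ℚ)^4*(b:ℚ)^2 + 5*(a:ℚ)^2*(b:ℚ)^4 + 6*a*(b:ℚ)^5
    + 2*(b:ℚ)^6)/12
noncomputable def p3 (a b : ℕ) : ℚ := (a:ℚ)^5*b + a*(b:ℚ)^5
noncomputable def v4 (a b : ℕ) : ℚ := -((a:ℚ)^4*(b:ℚ)^2 + 2*(a:ℚ)^3*(b:ℚ)^3 + (a:ℚ)^2*(b:ℚ)^4)/4
noncomputable def p4 (a b : ℕ) : ℚ := (a:ℚ)^3*(b:ℚ)^3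

lemma v2_sym : ∀ a b : ℕ, v2 a b = v2 b a := by intro a b; unfold v2; ring
lemma p2_sym : ∀ a b : ℕ, p2 a b = p2 b a := by intro a b; unfold p2; ring
lemma v2_p : ∀ a b : ℕ, v2 a b - v2 (a + b) b = p2 (a + b) b := by
  intro a b; unfold v2 p2; push_cast; ring
lemma v3_sym : ∀ a b : ℕ, v3 a b = v3 b a := by intro a b; unfold v3; ring
lemma p3_sym : ∀ a b : ℕ, p3 a b = p3 b a := by intro a b; unfold p3; ring
lemma v3_p : ∀ a b : ℕ, v3 a b - v3 (a + b) b = p3 (a + b) b := by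
  intro a b; unfold v3 p3; push_cast; ring
lemma v4_sym : ∀ a b : ℕ, v4 a b = v4 b a := by intro a b; unfold v4; ring
lemma p4_sym : ∀ a b : ℕ, p4 a b = p4 b a := by intro a b; unfold p4; ring
lemma v4_p : ∀ a b : ℕ, v4 a b - v4 (a + b) b = p4 (a + b) b := by
  intro a b; unfold v4 p4; push_cast; ring

lemma inner2 (d : ℕ) (hd : 1 ≤ d) :
    ∑ a ∈ Ico 1 d, v2 a (d - a)
      = (1/120)*(d:ℚ) + (-1/12)*(d:ℚ)^3 + (1/4)*(d:ℚ)^4 + (-7/40)*(d:ℚ)^5 := by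
  have h1 : ∀ a ∈ Ico 1 d, v2 a (d - a)
      = (-1/4)*(d:ℚ)^4 + ((1/2)*(d:ℚ)^3)*(a:ℚ)^1 + ((-3/4)*(d:ℚ)^2)*(a:ℚ)^2
        + ((1/2)*(d:ℚ))*(a:ℚ)^3 + (-1/4)*(a:ℚ)^4 := by
    intro a ha; rw [mem_Ico] at ha
    unfold v2
    rw [Nat.cast_sub (by omega : a ≤ d)]
    ring
  calc ∑ a ∈ Ico 1 d, v2 a (d - a)
      = ∑ a ∈ Ico 1 d, ((-1/4)*(d:ℚ)^4 + ((1/2)*(d:ℚ)^3)*(a:ℚ)^1 + ((-3/4)*(d:ℚ)^2)*(a:ℚ)^2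
        + ((1/2)*(d:ℚ))*(a:ℚ)^3 + (-1/4)*(a:ℚ)^4) := Finset.sum_congr rfl h1
    _ = (∑ _a ∈ Ico 1 d, ((-1/4)*(d:ℚ)^4)) + (((1/2)*(d:ℚ)^3) * ∑ a ∈ Ico 1 d, (a:ℚ)^1)
        + (((-3/4)*(d:ℚ)^2) * ∑ a ∈ Ico 1 d, (a:ℚ)^2)
        + (((1/2)*(d:ℚ)) * ∑ a ∈ Ico 1 d, (a:ℚ)^3)
        + ((-1/4) * ∑ a ∈ Ico 1 d, (a:ℚ)^4) := by
        rw [Finset.mul_sum, Finset.mul_sum, Finset.mul_sum, Finset.mul_sum,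
          ← Finset.sum_add_distrib, ← Finset.sum_add_distrib, ← Finset.sum_add_distrib,
          ← Finset.sum_add_distrib]
    _ = (1/120)*(d:ℚ) + (-1/12)*(d:ℚ)^3 + (1/4)*(d:ℚ)^4 + (-7/40)*(d:ℚ)^5 := by
        rw [ico_const _ d hd, ico_pow 1 d one_ne_zero, ico_pow 2 d (by norm_num),
          ico_pow 3 d (by norm_num), ico_pow 4 d (by norm_num),
          sum_range_pow1, sum_range_pow2, sum_range_pow3, sum_range_pow4]
        ring

lemma inner3 (d : ℕ) (hd : 1 ≤ d) :
    ∑ a ∈ Ico 1 d, v3 a (d - a)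
      = (-1/252)*(d:ℚ) + (-1/12)*(d:ℚ)^5 + (1/6)*(d:ℚ)^6 + (-5/63)*(d:ℚ)^7 := by
  have h1 : ∀ a ∈ Ico 1 d, v3 a (d - a)
      = (-1/6)*(d:ℚ)^6 + ((1/2)*(d:ℚ)^5)*(a:ℚ)^1 + ((-5/12)*(d:ℚ)^4)*(a:ℚ)^2
        + ((-5/12)*(d:ℚ)^2)*(a:ℚ)^4 + ((1/2)*(d:ℚ))*(a:ℚ)^5 + (-1/6)*(a:ℚ)^6 := by
    intro a ha; rw [mem_Ico] at ha
    unfold v3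
    rw [Nat.cast_sub (by omega : a ≤ d)]
    ring
  calc ∑ a ∈ Ico 1 d, v3 a (d - a)
      = ∑ a ∈ Ico 1 d, ((-1/6)*(d:ℚ)^6 + ((1/2)*(d:ℚ)^5)*(a:ℚ)^1 + ((-5/12)*(d:ℚ)^4)*(a:ℚ)^2
        + ((-5/12)*(d:ℚ)^2)*(a:ℚ)^4 + ((1/2)*(d:ℚ))*(a:ℚ)^5 + (-1/6)*(a:ℚ)^6) :=
        Finset.sum_congr rfl h1
    _ = (∑ _a ∈ Ico 1 d, ((-1/6)*(d:ℚ)^6)) + (((1/2)*(d:ℚ)^5) * ∑ a ∈ Ico 1 d, (a:ℚ)^1)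
        + (((-5/12)*(d:ℚ)^4) * ∑ a ∈ Ico 1 d, (a:ℚ)^2)
        + (((-5/12)*(d:ℚ)^2) * ∑ a ∈ Ico 1 d, (a:ℚ)^4)
        + (((1/2)*(d:ℚ)) * ∑ a ∈ Ico 1 d, (a:ℚ)^5)
        + ((-1/6) * ∑ a ∈ Ico 1 d, (a:ℚ)^6) := by
        rw [Finset.mul_sum, Finset.mul_sum, Finset.mul_sum, Finset.mul_sum, Finset.mul_sum,
          ← Finset.sum_add_distrib, ← Finset.sum_add_distrib, ← Finset.sum_add_distrib,
          ← Finset.sum_add_distrib, ← Finset.sum_add_distrib]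
    _ = (-1/252)*(d:ℚ) + (-1/12)*(d:ℚ)^5 + (1/6)*(d:ℚ)^6 + (-5/63)*(d:ℚ)^7 := by
        rw [ico_const _ d hd, ico_pow 1 d one_ne_zero, ico_pow 2 d (by norm_num),
          ico_pow 4 d (by norm_num), ico_pow 5 d (by norm_num), ico_pow 6 d (by norm_num),
          sum_range_pow1, sum_range_pow2, sum_range_pow4, sum_range_pow5, sum_range_pow6]
        ring

lemma inner4 (d : ℕ) (hd : 1 ≤ d) :
    ∑ a ∈ Ico 1 d, v4 a (d - a) = (1/120)*(d:ℚ)^3 + (-1/120)*(d:ℚ)^7 := by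
  have h1 : ∀ a ∈ Ico 1 d, v4 a (d - a)
      = ((-1/4)*(d:ℚ)^4)*(a:ℚ)^2 + ((1/2)*(d:ℚ)^3)*(a:ℚ)^3 + ((-1/4)*(d:ℚ)^2)*(a:ℚ)^4 := by
    intro a ha; rw [mem_Ico] at ha
    unfold v4
    rw [Nat.cast_sub (by omega : a ≤ d)]
    ring
  calc ∑ a ∈ Ico 1 d, v4 a (d - a)
      = ∑ a ∈ Ico 1 d, (((-1/4)*(d:ℚ)^4)*(a:ℚ)^2 + ((1/2)*(d:ℚ)^3)*(a:ℚ)^3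
        + ((-1/4)*(d:ℚ)^2)*(a:ℚ)^4) := Finset.sum_congr rfl h1
    _ = (((-1/4)*(d:ℚ)^4) * ∑ a ∈ Ico 1 d, (a:ℚ)^2) + (((1/2)*(d:ℚ)^3) * ∑ a ∈ Ico 1 d, (a:ℚ)^3)
        + (((-1/4)*(d:ℚ)^2) * ∑ a ∈ Ico 1 d, (a:ℚ)^4) := by
        rw [Finset.mul_sum, Finset.mul_sum, Finset.mul_sum,
          ← Finset.sum_add_distrib, ← Finset.sum_add_distrib]
    _ = (1/120)*(d:ℚ)^3 + (-1/120)*(d:ℚ)^7 := by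
        rw [ico_pow 2 d (by norm_num), ico_pow 3 d (by norm_num), ico_pow 4 d (by norm_num),
          sum_range_pow2, sum_range_pow3, sum_range_pow4]
        ring

lemma identity2 (n : ℕ) :
    ∑ m ∈ Ico 1 n, (sig 3 m * sig 1 (n - m) + sig 1 m * sig 3 (n - m))
      = 7/40 * sig 5 n + 1/12 * sig 3 n - 1/4 * ((n:ℚ) * sig 3 n) - 1/120 * sig 1 n := by
  have hA : ∑ t ∈ sols n, p2 t.1.1 t.2.1
      = ∑ m ∈ Ico 1 n, (sig 3 m * sig 1 (n - m) + sig 1 m * sig 3 (n - m)) := by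
    rw [conv_decomp n (fun t => p2 t.1.1 t.2.1)]
    apply Finset.sum_congr rfl
    intro m _
    rw [← sig_dA 3 m, ← sig_dA 1 (n - m), ← sig_dA 1 m, ← sig_dA 3 (n - m),
      Finset.sum_mul_sum, Finset.sum_mul_sum, Finset.sum_product, ← Finset.sum_add_distrib]
    apply Finset.sum_congr rfl; intro x _
    rw [← Finset.sum_add_distrib]
    apply Finset.sum_congr rfl; intro y _
    show p2 x.1 y.1 = (x.1:ℚ)^3 * (y.1:ℚ)^1 + (x.1:ℚ)^1 * (y.1:ℚ)^3
    unfold p2; ring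
  have hB : ∑ t ∈ sols n, p2 t.1.1 t.2.1
      = (∑ t ∈ (sols n).filter (fun t => t.1.1 = t.2.1), p2 t.1.1 t.2.1)
        + ∑ t ∈ (sols n).filter (fun t => ¬ t.1.1 = t.2.1), p2 t.1.1 t.2.1 :=
    (Finset.sum_filter_add_sum_filter_not (sols n) (fun t => t.1.1 = t.2.1)
      (fun t => p2 t.1.1 t.2.1)).symm
  have hC := key n v2 p2 v2_sym v2_p p2_sym
  have hD : ∑ t ∈ (sols n).filter (fun t => t.1.1 = t.2.1), p2 t.1.1 t.2.1
      = ∑ de ∈ Nat.divisorsAntidiagonal n, ∑ _x ∈ Ico 1 de.2, p2 de.1 de.1 :=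
    diag_ab n (fun t => p2 t.1.1 t.2.1)
  rw [← hA, hB, hC, hD]
  rw [← nsig 3 n, ← sig_dA 5 n, ← sig_dA 3 n, ← sig_dA 1 n]
  simp only [Finset.mul_sum, ← Finset.sum_add_distrib, ← Finset.sum_sub_distrib]
  apply Finset.sum_congr rfl
  intro de hde
  obtain ⟨hd1, he1⟩ := dA_pos hde
  rw [ico_const _ _ he1, ico_const _ _ he1, inner2 _ hd1]
  unfold p2 v2
  ring

lemma identity3 (n : ℕ) :
    ∑ m ∈ Ico 1 n, (sig 5 m * sig 1 (n - m) + sig 1 m * sig 5 (n - m))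
      = 5/63 * sig 7 n + 1/12 * sig 5 n - 1/6 * ((n:ℚ) * sig 5 n) + 1/252 * sig 1 n := by
  have hA : ∑ t ∈ sols n, p3 t.1.1 t.2.1
      = ∑ m ∈ Ico 1 n, (sig 5 m * sig 1 (n - m) + sig 1 m * sig 5 (n - m)) := by
    rw [conv_decomp n (fun t => p3 t.1.1 t.2.1)]
    apply Finset.sum_congr rfl
    intro m _
    rw [← sig_dA 5 m, ← sig_dA 1 (n - m), ← sig_dA 1 m, ← sig_dA 5 (n - m),
      Finset.sum_mul_sum, Finset.sum_mul_sum, Finset.sum_product, ← Finset.sum_add_distrib]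
    apply Finset.sum_congr rfl; intro x _
    rw [← Finset.sum_add_distrib]
    apply Finset.sum_congr rfl; intro y _
    show p3 x.1 y.1 = (x.1:ℚ)^5 * (y.1:ℚ)^1 + (x.1:ℚ)^1 * (y.1:ℚ)^5
    unfold p3; ring
  have hB : ∑ t ∈ sols n, p3 t.1.1 t.2.1
      = (∑ t ∈ (sols n).filter (fun t => t.1.1 = t.2.1), p3 t.1.1 t.2.1)
        + ∑ t ∈ (sols n).filter (fun t => ¬ t.1.1 = t.2.1), p3 t.1.1 t.2.1 :=
    (Finset.sum_filter_add_sum_filter_not (sols n) (fun t => t.1.1 = t.2.1)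
      (fun t => p3 t.1.1 t.2.1)).symm
  have hC := key n v3 p3 v3_sym v3_p p3_sym
  have hD : ∑ t ∈ (sols n).filter (fun t => t.1.1 = t.2.1), p3 t.1.1 t.2.1
      = ∑ de ∈ Nat.divisorsAntidiagonal n, ∑ _x ∈ Ico 1 de.2, p3 de.1 de.1 :=
    diag_ab n (fun t => p3 t.1.1 t.2.1)
  rw [← hA, hB, hC, hD]
  rw [← nsig 5 n, ← sig_dA 7 n, ← sig_dA 5 n, ← sig_dA 1 n]
  simp only [Finset.mul_sum, ← Finset.sum_add_distrib, ← Finset.sum_sub_distrib]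
  apply Finset.sum_congr rfl
  intro de hde
  obtain ⟨hd1, he1⟩ := dA_pos hde
  rw [ico_const _ _ he1, ico_const _ _ he1, inner3 _ hd1]
  unfold p3 v3
  ring

lemma identity4 (n : ℕ) :
    ∑ m ∈ Ico 1 n, sig 3 m * sig 3 (n - m)
      = 1/120 * sig 7 n - 1/120 * sig 3 n := by
  have hA : ∑ t ∈ sols n, p4 t.1.1 t.2.1
      = ∑ m ∈ Ico 1 n, sig 3 m * sig 3 (n - m) := by
    rw [conv_decomp n (fun t => p4 t.1.1 t.2.1)]
    apply Finset.sum_congr rfl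
    intro m _
    rw [← sig_dA 3 m, ← sig_dA 3 (n - m), Finset.sum_mul_sum, Finset.sum_product]
    apply Finset.sum_congr rfl; intro x _
    apply Finset.sum_congr rfl; intro y _
    show p4 x.1 y.1 = (x.1:ℚ)^3 * (y.1:ℚ)^3
    unfold p4; ring
  have hB : ∑ t ∈ sols n, p4 t.1.1 t.2.1
      = (∑ t ∈ (sols n).filter (fun t => t.1.1 = t.2.1), p4 t.1.1 t.2.1)
        + ∑ t ∈ (sols n).filter (fun t => ¬ t.1.1 = t.2.1), p4 t.1.1 t.2.1 :=
    (Finset.sum_filter_add_sum_filter_not (sols n) (fun t => t.1.1 = t.2.1)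
      (fun t => p4 t.1.1 t.2.1)).symm
  have hC := key n v4 p4 v4_sym v4_p p4_sym
  have hD : ∑ t ∈ (sols n).filter (fun t => t.1.1 = t.2.1), p4 t.1.1 t.2.1
      = ∑ de ∈ Nat.divisorsAntidiagonal n, ∑ _x ∈ Ico 1 de.2, p4 de.1 de.1 :=
    diag_ab n (fun t => p4 t.1.1 t.2.1)
  rw [← hA, hB, hC, hD]
  rw [← sig_dA 7 n, ← sig_dA 3 n]
  simp only [Finset.mul_sum, ← Finset.sum_add_distrib, ← Finset.sum_sub_distrib]
  apply Finset.sum_congr rfl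
  intro de hde
  obtain ⟨hd1, he1⟩ := dA_pos hde
  rw [ico_const _ _ he1, ico_const _ _ he1, inner4 _ hd1]
  unfold p4 v4
  ring


lemma coeff_E2 (m : ℕ) : PowerSeries.coeff m E2 = if m = 0 then 1 else -24 * sig 1 m := by
  rw [E2, PowerSeries.coeff_mk]
  congr 1
  unfold sig
  simp [pow_one]

lemma coeff_E4 (m : ℕ) : PowerSeries.coeff m E4 = if m = 0 then 1 else 240 * sig 3 m := by
  rw [E4, PowerSeries.coeff_mk]; rfl

lemma coeff_E6 (m : ℕ) : PowerSeries.coeff m E6 = if m = 0 then 1 else -504 * sig 5 m := by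
  rw [E6, PowerSeries.coeff_mk]; rfl

lemma coeff_qDeriv (f : PowerSeries ℚ) (n : ℕ) :
    PowerSeries.coeff n (qDeriv f) = (n:ℚ) * PowerSeries.coeff n f := by
  rw [qDeriv, PowerSeries.coeff_mk]

lemma antidiag_split (F : ℕ × ℕ → ℚ) (n : ℕ) (hn : 1 ≤ n) :
    ∑ p ∈ Finset.HasAntidiagonal.antidiagonal n, F p
      = F (0, n) + F (n, 0) + ∑ m ∈ Ico 1 n, F (m, n - m) := by
  rw [Finset.Nat.sum_antidiagonal_eq_sum_range_succ_mk]
  have h : range (n+1) = insert 0 (insert n (Ico 1 n)) := by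
    ext a; simp only [mem_range, mem_insert, mem_Ico]; omega
  rw [h, Finset.sum_insert, Finset.sum_insert]
  · rw [Nat.sub_zero, Nat.sub_self]; ring
  · rw [mem_Ico]; omega
  · simp only [mem_insert, mem_Ico]; omega

/-- coefficient of a product at `n ≥ 1`, general helper -/
lemma coeff_mul_split (f g : PowerSeries ℚ) (n : ℕ) (hn : 1 ≤ n) :
    PowerSeries.coeff n (f * g)
      = PowerSeries.coeff 0 f * PowerSeries.coeff n g
        + PowerSeries.coeff n f * PowerSeries.coeff 0 g
        + ∑ m ∈ Ico 1 n, PowerSeries.coeff m f * PowerSeries.coeff (n - m) g := by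
  rw [PowerSeries.coeff_mul,
    antidiag_split (fun p => PowerSeries.coeff p.1 f * PowerSeries.coeff p.2 g) n hn]


theorem eq1 : qDeriv E2 = (1 / 12 : ℚ) • (E2 ^ 2 - E4) := by
  ext n
  rw [coeff_qDeriv, map_smul, map_sub, pow_two, smul_eq_mul]
  rcases Nat.eq_zero_or_pos n with hn | hn
  · subst hn
    simp [PowerSeries.coeff_mul, coeff_E2, coeff_E4]
  · have hn0 : n ≠ 0 := by omega
    rw [coeff_mul_split E2 E2 n hn]
    have hs : ∑ m ∈ Ico 1 n, PowerSeries.coeff m E2 * PowerSeries.coeff (n - m) E2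
        = 576 * ∑ m ∈ Ico 1 n, sig 1 m * sig 1 (n - m) := by
      rw [Finset.mul_sum]
      apply Finset.sum_congr rfl
      intro m hm; rw [mem_Ico] at hm
      rw [coeff_E2, coeff_E2, if_neg (by omega), if_neg (by omega)]
      ring
    rw [hs, coeff_E2 0, coeff_E2 n, coeff_E4 n, if_pos rfl, if_neg hn0, if_neg hn0]
    linear_combination -48 * identity1 n

theorem eq2 : qDeriv E4 = (1 / 3 : ℚ) • (E2 * E4 - E6) := by
  ext n
  rw [coeff_qDeriv, map_smul, map_sub, smul_eq_mul]
  rcases Nat.eq_zero_or_pos n with hn | hn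
  · subst hn
    simp [PowerSeries.coeff_mul, coeff_E2, coeff_E4, coeff_E6]
  · have hn0 : n ≠ 0 := by omega
    rw [coeff_mul_split E2 E4 n hn]
    have hs : ∑ m ∈ Ico 1 n, PowerSeries.coeff m E2 * PowerSeries.coeff (n - m) E4
        = -5760 * ∑ m ∈ Ico 1 n, sig 1 m * sig 3 (n - m) := by
      rw [Finset.mul_sum]
      apply Finset.sum_congr rfl
      intro m hm; rw [mem_Ico] at hm
      rw [coeff_E2, coeff_E4, if_neg (by omega), if_neg (by omega)]
      ring
    rw [hs, coeff_E2 0, coeff_E2 n, coeff_E4 0, coeff_E4 n, coeff_E6 n,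
      if_pos rfl, if_pos rfl, if_neg hn0, if_neg hn0, if_neg hn0]
    have h2 := identity2 n
    rw [Finset.sum_add_distrib] at h2
    have hcomm := conv_comm 3 1 n
    linear_combination 960 * h2 - 960 * hcomm
theorem eq3 : qDeriv E6 = (1 / 2 : ℚ) • (E2 * E6 - E4 ^ 2) := by
  ext n
  rw [coeff_qDeriv, map_smul, map_sub, pow_two, smul_eq_mul]
  rcases Nat.eq_zero_or_pos n with hn | hn
  · subst hn
    simp [PowerSeries.coeff_mul, coeff_E2, coeff_E4, coeff_E6]
  · have hn0 : n ≠ 0 := by omega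
    rw [coeff_mul_split E2 E6 n hn, coeff_mul_split E4 E4 n hn]
    have hs : ∑ m ∈ Ico 1 n, PowerSeries.coeff m E2 * PowerSeries.coeff (n - m) E6
        = 12096 * ∑ m ∈ Ico 1 n, sig 1 m * sig 5 (n - m) := by
      rw [Finset.mul_sum]
      apply Finset.sum_congr rfl
      intro m hm; rw [mem_Ico] at hm
      rw [coeff_E2, coeff_E6, if_neg (by omega), if_neg (by omega)]
      ring
    have hs' : ∑ m ∈ Ico 1 n, PowerSeries.coeff m E4 * PowerSeries.coeff (n - m) E4
        = 57600 * ∑ m ∈ Ico 1 n, sig 3 m * sig 3 (n - m) := by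
      rw [Finset.mul_sum]
      apply Finset.sum_congr rfl
      intro m hm; rw [mem_Ico] at hm
      rw [coeff_E4, coeff_E4, if_neg (by omega), if_neg (by omega)]
      ring
    rw [hs, hs', coeff_E2 0, coeff_E2 n, coeff_E6 0, coeff_E6 n, coeff_E4 0, coeff_E4 n,
      if_pos rfl, if_pos rfl, if_pos rfl, if_neg hn0, if_neg hn0, if_neg hn0]
    have h3 := identity3 n
    rw [Finset.sum_add_distrib] at h3
    have hcomm := conv_comm 5 1 n
    linear_combination -3024 * h3 + 3024 * hcomm + 28800 * identity4 n

end Rama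

/-- Ramanujan's differential system for `E₂, E₄, E₆`. -/
theorem ramanujan_differential_equations :
    qDeriv E2 = (1 / 12 : ℚ) • (E2 ^ 2 - E4) ∧
    qDeriv E4 = (1 / 3 : ℚ) • (E2 * E4 - E6) ∧
    qDeriv E6 = (1 / 2 : ℚ) • (E2 * E6 - E4 ^ 2) :=
  ⟨Rama.eq1, Rama.eq2, Rama.eq3⟩
end
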